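/- arXiv:2303.11025 — 2 statements merged into one kernel-verified Lean document; each statement's English description precedes it below -/
import Mathlib

section
/- For any reduced pipe dream P ∈ Π(ω) and any j ∈ [n], pipe j of P has exactly ninv(ω,j) southeast elbows, exactly 1 + ninv(ω,j) northwest elbows, exactly j − 1 − ninv(ω,j) crossings at which it is the vertical pipe, and exactly ω⁻¹(j) − 1 − ninv(ω,j) crossings at which it is the horizontal pipe, where ninv(ω,j) = #{i ∈ [n] : i < j and ω⁻¹(i) < ω⁻¹(j)}. -/
/-- A pipe dream of size `n` on the triangular shape, with boxes indexed by pairs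
`(r, c)` of a row `r` and a column `c`, both `0`-indexed (rows increase southwards,
columns increase eastwards).  `cross r c = true` means that box `(r, c)` contains a
crossing tile; all other boxes contain elbow tiles.  Crossings are only allowed in
the full boxes of the triangular shape, i.e. those with `r + c + 2 ≤ n` (the boxes
with `r + c + 1 = n` are the half-boxes on the antidiagonal, which are forced
elbows).  The `n` pipes enter horizontally on the left side in rows `0, …, n-1` and
exit vertically on the top side in columns `0, …, n-1`; pipe `k` is the pipe
entering at row `k`.  An elbow tile connects the west edge of its box to the north
edge (the pipe travelling through this elbow passes northwest of the tile) and the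
south edge to the east edge (this pipe passes southeast of the tile); a crossing
tile connects west to east and south to north. -/
structure PipeDream (n : ℕ) where
  cross : ℕ → ℕ → Bool
  inShape : ∀ r c : ℕ, cross r c = true → r + c + 2 ≤ n

namespace PipeDream

variable {n : ℕ}

/-- `(P.pipes r c).1` is the label of the pipe entering box `(r, c)` from the west,
and `(P.pipes r c).2` is the label of the pipe entering box `(r, c)` from the south
(junk value `0` if there is no box below box `(r, c)` in the triangular shape). -/
def pipes (P : PipeDream n) : ℕ → ℕ → ℕ × ℕ
  | r, c =>
    (if hc : c = 0 then r
      else if P.cross r (c - 1) then (pipes P r (c - 1)).1 else (pipes P r (c - 1)).2,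
     if hr : r + c + 2 ≤ n then
        if P.cross (r + 1) c then (pipes P (r + 1) c).2 else (pipes P (r + 1) c).1
      else 0)
  termination_by r c => (n - r) + c
  decreasing_by all_goals omega

/-- The pipe entering box `(r, c)` from the west (travelling eastwards). -/
def west (P : PipeDream n) (r c : ℕ) : ℕ := (pipes P r c).1

/-- The pipe entering box `(r, c)` from the south (travelling northwards). -/
def south (P : PipeDream n) (r c : ℕ) : ℕ := (pipes P r c).2

/-- The pipe exiting on the top side at column `c`. -/
def exitPipe (P : PipeDream n) (c : ℕ) : ℕ :=
  if P.cross 0 c then P.south 0 c else P.west 0 c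

/-- `P` has exit permutation `ω`, i.e. the pipe exiting at column `c` is `ω c`;
equivalently, pipe `k` exits at column `ω⁻¹ k`. -/
def HasExitPerm (P : PipeDream n) (ω : Equiv.Perm (Fin n)) : Prop :=
  ∀ c : Fin n, P.exitPipe c.val = (ω c).val

/-- `P` is reduced: any two of its pipes cross at most once. -/
def Reduced (P : PipeDream n) : Prop :=
  ∀ r c r' c' : ℕ, P.cross r c = true → P.cross r' c' = true → (r, c) ≠ (r', c') →
    ¬ ((P.west r c = P.west r' c' ∧ P.south r c = P.south r' c') ∨
        (P.west r c = P.south r' c' ∧ P.south r c = P.west r' c'))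

/-- The arcs of the contact graph `P♯` of `P`: there is one arc for each elbow
contact of `P` (an elbow tile in a full box of the triangular shape), oriented from
the pipe passing northwest of the contact (the one travelling west-to-north) to the
pipe passing southeast of it (the one travelling south-to-east). -/
def Arc (P : PipeDream n) (i j : ℕ) : Prop :=
  ∃ r c : ℕ, r + c + 2 ≤ n ∧ P.cross r c = false ∧ P.west r c = i ∧ P.south r c = j

/-- `P` is acyclic: its contact graph has no directed cycle. -/
def Acyclic (P : PipeDream n) : Prop := ∀ i : ℕ, ¬ Relation.TransGen P.Arc i i

/-- `i ⪯_P j` : there is a directed path (possibly empty) from `i` to `j` in the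
contact graph of `P`. -/
def Path (P : PipeDream n) (i j : ℕ) : Prop := Relation.ReflTransGen P.Arc i j

/-- `π` is a linear extension of `P` : `π⁻¹ i < π⁻¹ j` for every arc `i → j` of the
contact graph of `P`. -/
def LinExt (P : PipeDream n) (π : Equiv.Perm (Fin n)) : Prop :=
  ∀ i j : Fin n, P.Arc i.val j.val → π⁻¹ i < π⁻¹ j

/-- There is a contact (an elbow tile in a full box) between pipes `i` and `j`
at box `b`. -/
def ContactAt (P : PipeDream n) (i j : ℕ) (b : ℕ × ℕ) : Prop :=
  b.1 + b.2 + 2 ≤ n ∧ P.cross b.1 b.2 = false ∧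
    ((P.west b.1 b.2 = i ∧ P.south b.1 b.2 = j) ∨
      (P.west b.1 b.2 = j ∧ P.south b.1 b.2 = i))

/-- `P'` is obtained from `P` by the flip exchanging the contact at box `b` with the
crossing at box `b'` (a contact and a crossing between the same two pipes). -/
def IsFlip (P P' : PipeDream n) (b b' : ℕ × ℕ) : Prop :=
  b ≠ b' ∧
  P.cross b.1 b.2 = false ∧ P.cross b'.1 b'.2 = true ∧
  P'.cross b.1 b.2 = true ∧ P'.cross b'.1 b'.2 = false ∧
  (∀ r c : ℕ, (r, c) ≠ b → (r, c) ≠ b' → P.cross r c = P'.cross r c) ∧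
  ((P.west b.1 b.2 = P.west b'.1 b'.2 ∧ P.south b.1 b.2 = P.south b'.1 b'.2) ∨
    (P.west b.1 b.2 = P.south b'.1 b'.2 ∧ P.south b.1 b.2 = P.west b'.1 b'.2))

/-- There is an increasing flip from `P` to `P'`: a flip exchanging a contact at a
box `b` weakly southwest of the box `b'` of the corresponding crossing. -/
def IncFlip (P P' : PipeDream n) : Prop :=
  ∃ b b' : ℕ × ℕ, P.IsFlip P' b b' ∧ b'.1 ≤ b.1 ∧ b.2 ≤ b'.2

end PipeDream

/-- The weak order on permutations of `Fin n` : `π ≤ σ` if and only if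
`Inv(π) ⊆ Inv(σ)`, where `Inv(π)` is the set of pairs `(i, j)` with `i < j` and
`π⁻¹ i > π⁻¹ j`. -/
def WeakLE {n : ℕ} (π σ : Equiv.Perm (Fin n)) : Prop :=
  ∀ i j : Fin n, i < j → π⁻¹ j < π⁻¹ i → σ⁻¹ j < σ⁻¹ i

/-- The number `ninv ω j` of non-inversions of `j` in `ω` :
`#{i : i < j and ω⁻¹ i < ω⁻¹ j}`. -/
def ninv {n : ℕ} (ω : Equiv.Perm (Fin n)) (j : Fin n) : ℕ :=
  (Finset.univ.filter (fun i : Fin n => i < j ∧ ω⁻¹ i < ω⁻¹ j)).card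

namespace PipeDream

variable {n : ℕ}

theorem west_zero (P : PipeDream n) (r : ℕ) : P.west r 0 = r := by
  rw [west, pipes]; simp

theorem west_succ (P : PipeDream n) (r c : ℕ) :
    P.west r (c + 1) = if P.cross r c then P.west r c else P.south r c := by
  conv_lhs => rw [west, pipes]; simp
  simp [west, south]

theorem south_eq (P : PipeDream n) (r c : ℕ) :
    P.south r c = if r + c + 2 ≤ n then
      (if P.cross (r + 1) c then P.south (r + 1) c else P.west (r + 1) c) else 0 := by
  conv_lhs => rw [south, pipes]
  simp [west, south]

end PipeDream
namespace PipeDream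

variable {n : ℕ}

/-- One step of a pipe through a box: state `(r, c, w)` means the pipe is in box
`(r,c)`, entering from the west if `w = true` and from the south if `w = false`. -/
def step (P : PipeDream n) (s : ℕ × ℕ × Bool) : Option (ℕ × ℕ × Bool) :=
  if P.cross s.1 s.2.1 = s.2.2 then some (s.1, s.2.1 + 1, true)
  else if s.1 = 0 then none
  else some (s.1 - 1, s.2.1, false)

/-- The trajectory of pipe `j`. -/
def traj (P : PipeDream n) (j : ℕ) : ℕ → Option (ℕ × ℕ × Bool)
  | 0 => some (j, 0, true)
  | t + 1 => (P.traj j t).bind P.step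

theorem traj_inv (P : PipeDream n) {j : ℕ} (hj : j < n) :
    ∀ {t r c : ℕ} {w : Bool}, P.traj j t = some (r, c, w) →
      c + j = t + r ∧ r + c + 1 ≤ n ∧
        (w = true → P.west r c = j) ∧
        (w = false → r + c + 2 ≤ n ∧ P.south r c = j) := by
  intro t
  induction t with
  | zero =>
    intro r c w h
    rw [traj] at h
    simp only [Option.some.injEq, Prod.mk.injEq] at h
    obtain ⟨rfl, rfl, rfl⟩ := h
    exact ⟨rfl, by omega, fun _ => P.west_zero j, by simp⟩
  | succ t ih =>
    intro r c w h
    rw [traj] at h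
    obtain ⟨⟨r', c', w'⟩, h1, h2⟩ := Option.bind_eq_some_iff.mp h
    obtain ⟨hd, hsh, hw, hs⟩ := ih h1
    rw [step] at h2
    simp only [] at h2
    split_ifs at h2 with hcw hr0
    · simp only [Option.some.injEq, Prod.mk.injEq] at h2
      obtain ⟨rfl, rfl, rfl⟩ := h2
      refine ⟨by omega, ?_, fun _ => ?_, by simp⟩
      · cases w' with
        | true => exact P.inShape _ _ (hcw.trans rfl)
        | false => exact (hs rfl).1
      · rw [west_succ, hcw]
        cases w' with
        | true => simp [hw rfl]
        | false => simpa using (hs rfl).2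
    · simp only [Option.some.injEq, Prod.mk.injEq] at h2
      obtain ⟨rfl, rfl, rfl⟩ := h2
      have hsh2 : r' - 1 + c' + 2 ≤ n := by omega
      refine ⟨by omega, by omega, by simp, fun _ => ⟨hsh2, ?_⟩⟩
      rw [south_eq, if_pos hsh2]
      have hr1 : r' - 1 + 1 = r' := by omega
      rw [hr1]
      cases w' with
      | true =>
        have : P.cross r' c' = false := by
          cases hcross : P.cross r' c' <;> simp_all
        simp [this, hw rfl]
      | false =>
        have : P.cross r' c' = true := by
          cases hcross : P.cross r' c' <;> simp_all
        simp [this, (hs rfl).2]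

end PipeDream
namespace PipeDream

variable {n : ℕ}

theorem traj_surj_aux (P : PipeDream n) :
    ∀ m r c : ℕ, n - r + c ≤ m →
    (r + c + 1 ≤ n → P.west r c < n ∧ ∃ t, P.traj (P.west r c) t = some (r, c, true)) ∧
    (r + c + 2 ≤ n → P.south r c < n ∧ ∃ t, P.traj (P.south r c) t = some (r, c, false)) := by
  intro m
  induction m with
  | zero =>
    intro r c hm
    constructor <;> intro hsh <;> omega
  | succ m ih =>
    intro r c hm
    constructor
    · intro hsh
      match c with
      | 0 =>
        rw [west_zero]
        exact ⟨by omega, 0, rfl⟩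
      | c' + 1 =>
        rw [west_succ]
        by_cases hc : P.cross r c' = true
        · rw [if_pos hc]
          obtain ⟨hlt, t, ht⟩ := (ih r c' (by omega)).1 (by omega)
          refine ⟨hlt, t + 1, ?_⟩
          rw [traj, ht, Option.bind_some, step]
          simp [hc]
        · rw [if_neg hc]
          have hc' : P.cross r c' = false := by simpa using hc
          obtain ⟨hlt, t, ht⟩ := (ih r c' (by omega)).2 (by omega)
          refine ⟨hlt, t + 1, ?_⟩
          rw [traj, ht, Option.bind_some, step]
          simp [hc']
    · intro hsh
      rw [south_eq, if_pos hsh]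
      by_cases hc : P.cross (r + 1) c = true
      · have hsh2 : r + 1 + c + 2 ≤ n := P.inShape _ _ hc
        rw [if_pos hc]
        obtain ⟨hlt, t, ht⟩ := (ih (r + 1) c (by omega)).2 hsh2
        refine ⟨hlt, t + 1, ?_⟩
        rw [traj, ht, Option.bind_some, step]
        simp [hc]
      · rw [if_neg hc]
        have hc' : P.cross (r + 1) c = false := by simpa using hc
        obtain ⟨hlt, t, ht⟩ := (ih (r + 1) c (by omega)).1 (by omega)
        refine ⟨hlt, t + 1, ?_⟩
        rw [traj, ht, Option.bind_some, step]
        simp [hc']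

theorem west_traj (P : PipeDream n) {r c : ℕ} (hsh : r + c + 1 ≤ n) :
    P.west r c < n ∧ ∃ t, P.traj (P.west r c) t = some (r, c, true) :=
  (P.traj_surj_aux (n - r + c) r c le_rfl).1 hsh

theorem south_traj (P : PipeDream n) {r c : ℕ} (hsh : r + c + 2 ≤ n) :
    P.south r c < n ∧ ∃ t, P.traj (P.south r c) t = some (r, c, false) :=
  (P.traj_surj_aux (n - r + c) r c le_rfl).2 hsh

theorem traj_none_mono (P : PipeDream n) {j t t' : ℕ} (h : P.traj j t = none)
    (htt : t ≤ t') : P.traj j t' = none := by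
  induction t' with
  | zero => exact Nat.le_zero.mp htt ▸ h
  | succ t' ih =>
    rcases Nat.lt_or_ge t (t' + 1) with h' | h'
    · rw [traj, ih (by omega)]; rfl
    · exact (Nat.le_antisymm htt h') ▸ h

theorem traj_bound (P : PipeDream n) {j : ℕ} (hj : j < n) : P.traj j (n + j) = none := by
  cases h : P.traj j (n + j) with
  | none => rfl
  | some s =>
    obtain ⟨r, c, w⟩ := s
    have := P.traj_inv hj h
    omega

theorem exists_exit (P : PipeDream n) {j : ℕ} (hj : j < n) :
    ∃ e : ℕ, ∃ w : Bool, e + 1 ≤ n ∧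
      P.traj j (j + e) = some (0, e, w) ∧ P.traj j (j + e + 1) = none ∧
      P.cross 0 e = !w ∧ P.exitPipe e = j := by
  have hex : ∃ t, P.traj j t = none := ⟨n + j, P.traj_bound hj⟩
  classical
  have hTspec : P.traj j (Nat.find hex) = none := Nat.find_spec hex
  have hT0 : Nat.find hex ≠ 0 := by
    intro h
    rw [h, traj] at hTspec
    cases hTspec
  obtain ⟨t, hTt⟩ : ∃ t, Nat.find hex = t + 1 := ⟨Nat.find hex - 1, by omega⟩
  rw [hTt] at hTspec
  have htsome : P.traj j t ≠ none := Nat.find_min hex (by omega)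
  cases h : P.traj j t with
  | none => exact absurd h htsome
  | some s =>
    obtain ⟨r, c, w⟩ := s
    have hstep : P.step (r, c, w) = none := by
      rw [traj, h, Option.bind_some] at hTspec
      exact hTspec
    rw [step] at hstep
    dsimp only at hstep
    split_ifs at hstep with h1 h2
    -- only the branch `¬ cross = w`, `r = 0` survives
    subst h2
    obtain ⟨hd, hsh, hw, hs⟩ := P.traj_inv hj h
    have hcw : P.cross 0 c = !w := by
      cases hcr : P.cross 0 c <;> cases w <;> simp_all
    have hdj : j + c = t := by omega
    refine ⟨c, w, by omega, by rw [hdj]; exact h, by rw [hdj]; exact hTspec, hcw, ?_⟩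
    rw [exitPipe, hcw]
    cases w with
    | true => simpa using hw rfl
    | false => simpa using (hs rfl).2

theorem traj_ne_none_iff (P : PipeDream n) {j e t : ℕ} {w : Bool}
    (hT : P.traj j (j + e) = some (0, e, w)) (hN : P.traj j (j + e + 1) = none) :
    P.traj j t ≠ none ↔ t ≤ j + e := by
  constructor
  · intro h
    by_contra hle
    exact h (P.traj_none_mono hN (by omega))
  · intro h hnone
    rw [P.traj_none_mono hnone h] at hT
    cases hT

end PipeDream
namespace PipeDream

variable {n : ℕ}

/-- Relative position of pipe `k` at time `t` along its diagonal (junk if dead). -/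
def posAt (P : PipeDream n) (k t : ℕ) : ℕ :=
  match P.traj k t with
  | some (r, _, w) => 2 * r + cond w 0 1
  | none => 0

theorem posAt_eq (P : PipeDream n) {k t r c : ℕ} {w : Bool}
    (h : P.traj k t = some (r, c, w)) : P.posAt k t = 2 * r + cond w 0 1 := by
  rw [posAt, h]

/-- Two distinct pipes never occupy the same state. -/
theorem state_ne (P : PipeDream n) {k k' t t' r c : ℕ} {w : Bool}
    (hk : k < n) (hk' : k' < n)
    (h : P.traj k t = some (r, c, w)) (h' : P.traj k' t' = some (r, c, w)) : k = k' := by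
  obtain ⟨-, -, hw, hs⟩ := P.traj_inv hk h
  obtain ⟨-, -, hw', hs'⟩ := P.traj_inv hk' h'
  cases w with
  | true => rw [← hw rfl, ← hw' rfl]
  | false => rw [← (hs rfl).2, ← (hs' rfl).2]

theorem traj_step (P : PipeDream n) {k t r c r' c' : ℕ} {w w' : Bool}
    (h : P.traj k t = some (r, c, w)) (h' : P.traj k (t + 1) = some (r', c', w')) :
    (P.cross r c = w ∧ r' = r ∧ c' = c + 1 ∧ w' = true) ∨
    (P.cross r c ≠ w ∧ 1 ≤ r ∧ r' = r - 1 ∧ c' = c ∧ w' = false) := by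
  rw [traj, h, Option.bind_some, step] at h'
  dsimp only at h'
  split_ifs at h' with h1 h2
  · simp only [Option.some.injEq, Prod.mk.injEq] at h'
    exact Or.inl ⟨h1, h'.1.symm, h'.2.1.symm, h'.2.2.symm⟩
  · simp only [Option.some.injEq, Prod.mk.injEq] at h'
    exact Or.inr ⟨h1, by omega, h'.1.symm, h'.2.1.symm, h'.2.2.symm⟩

/-- There is a crossing between pipes `i` and `j` (with offset `d = j - i`) at
time `s` (on pipe `i`'s clock). -/
def Ev (P : PipeDream n) (i j d s : ℕ) : Prop :=
  ∃ r c : ℕ, ∃ wa wb : Bool, P.traj i s = some (r, c, wa) ∧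
    P.traj j (s + d) = some (r, c, wb) ∧ P.cross r c = true

/-- Pipe `i` is above pipe `j` on the common diagonal at time `s`. -/
def Abv (P : PipeDream n) (i j d s : ℕ) : Prop := P.posAt i s < P.posAt j (s + d)

theorem pair_step (P : PipeDream n) {i j d : ℕ} (hij : i + d = j) (hd : 0 < d) (hjn : j < n)
    {s ra ca rb cb : ℕ} {wa wb : Bool}
    (ha : P.traj i s = some (ra, ca, wa))
    (hb : P.traj j (s + d) = some (rb, cb, wb))
    {sa' sb' : ℕ × ℕ × Bool}
    (ha' : P.traj i (s + 1) = some sa')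
    (hb' : P.traj j (s + d + 1) = some sb') :
    (Ev P i j d s → (Abv P i j d (s + 1) ↔ ¬ Abv P i j d s)) ∧
    (¬ Ev P i j d s → (Abv P i j d (s + 1) ↔ Abv P i j d s)) := by
  have hin : i < n := by omega
  obtain ⟨ra', ca', wa'⟩ := sa'
  obtain ⟨rb', cb', wb'⟩ := sb'
  have hda : ca + i = s + ra := (P.traj_inv hin ha).1
  have hdb : cb + i = s + rb := by
    have := (P.traj_inv hjn hb).1
    omega
  have hb1 : P.traj j (s + 1 + d) = some (rb', cb', wb') := by
    rwa [show s + 1 + d = s + d + 1 by omega]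
  have habv : Abv P i j d s ↔
      2 * ra + cond wa 0 1 < 2 * rb + cond wb 0 1 := by
    rw [Abv, P.posAt_eq ha, P.posAt_eq hb]
  have habv' : Abv P i j d (s + 1) ↔
      2 * ra' + cond wa' 0 1 < 2 * rb' + cond wb' 0 1 := by
    rw [Abv, P.posAt_eq ha', P.posAt_eq hb1]
  have hstA : (P.cross ra ca = wa ∧ ra' = ra ∧ (cond wa' (0:ℕ) 1) = 0) ∨
      (P.cross ra ca ≠ wa ∧ 1 ≤ ra ∧ ra' = ra - 1 ∧ (cond wa' (0:ℕ) 1) = 1) := by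
    rcases P.traj_step ha ha' with ⟨e1, e2, e3, e4⟩ | ⟨e1, e2, e3, e4, e5⟩
    · subst e4; exact Or.inl ⟨e1, e2, by simp⟩
    · subst e5; exact Or.inr ⟨e1, e2, e3, by simp⟩
  have hstB : (P.cross rb cb = wb ∧ rb' = rb ∧ (cond wb' (0:ℕ) 1) = 0) ∨
      (P.cross rb cb ≠ wb ∧ 1 ≤ rb ∧ rb' = rb - 1 ∧ (cond wb' (0:ℕ) 1) = 1) := by
    rcases P.traj_step hb hb' with ⟨e1, e2, e3, e4⟩ | ⟨e1, e2, e3, e4, e5⟩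
    · subst e4; exact Or.inl ⟨e1, e2, by simp⟩
    · subst e5; exact Or.inr ⟨e1, e2, e3, by simp⟩
  have hEv : Ev P i j d s ↔ (ra = rb ∧ P.cross ra ca = true) := by
    constructor
    · rintro ⟨r, c, w1, w2, h1, h2, hcr⟩
      rw [ha] at h1
      rw [hb] at h2
      simp only [Option.some.injEq, Prod.mk.injEq] at h1 h2
      obtain ⟨rfl, rfl, rfl⟩ := h1
      obtain ⟨he1, he2, rfl⟩ := h2
      exact ⟨he1.symm, hcr⟩
    · rintro ⟨hr, hcr⟩
      refine ⟨ra, ca, wa, wb, ha, ?_, hcr⟩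
      rw [hb]
      have hcb : cb = ca := by omega
      rw [hr, hcb]
  by_cases hr : ra = rb
  · subst hr
    have hcc : cb = ca := by omega
    subst hcc
    have hww : wa ≠ wb := by
      intro hw
      subst hw
      have := P.state_ne hin hjn ha hb
      omega
    rw [habv, habv', hEv]
    by_cases hcr : P.cross ra cb = true
    · refine ⟨fun _ => ?_, fun hn => absurd ⟨rfl, hcr⟩ hn⟩
      cases wa <;> cases wb
      · exact absurd rfl hww
      · -- wa = false (vertical), wb = true (horizontal), crossing
        rcases hstA with ⟨e1, e2, e3⟩ | ⟨e1, e2, e3, e4⟩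
        · rw [hcr] at e1; exact absurd e1 (by simp)
        · rcases hstB with ⟨f1, f2, f3⟩ | ⟨f1, f2, f3, f4⟩
          · simp only [Bool.cond_true, Bool.cond_false]
            omega
          · rw [hcr] at f1; exact absurd rfl f1
      · -- wa = true, wb = false
        rcases hstA with ⟨e1, e2, e3⟩ | ⟨e1, e2, e3, e4⟩
        · rcases hstB with ⟨f1, f2, f3⟩ | ⟨f1, f2, f3, f4⟩
          · rw [hcr] at f1; exact absurd f1 (by simp)
          · simp only [Bool.cond_true, Bool.cond_false]
            omega
        · rw [hcr] at e1; exact absurd rfl e1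
      · exact absurd rfl hww
    · have hcf : P.cross ra cb = false := by simpa using hcr
      refine ⟨fun hE => absurd hE.2 hcr, fun _ => ?_⟩
      cases wa <;> cases wb
      · exact absurd rfl hww
      · -- wa = false, wb = true, elbow: i goes east, j goes north
        rcases hstA with ⟨e1, e2, e3⟩ | ⟨e1, e2, e3, e4⟩
        · rcases hstB with ⟨f1, f2, f3⟩ | ⟨f1, f2, f3, f4⟩
          · rw [hcf] at f1; exact absurd f1 (by simp)
          · simp only [Bool.cond_true, Bool.cond_false]
            omega
        · rw [hcf] at e1; exact absurd e1 (by simp)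
      · -- wa = true, wb = false: i goes north, j goes east
        rcases hstA with ⟨e1, e2, e3⟩ | ⟨e1, e2, e3, e4⟩
        · rw [hcf] at e1; exact absurd e1 (by simp)
        · rcases hstB with ⟨f1, f2, f3⟩ | ⟨f1, f2, f3, f4⟩
          · simp only [Bool.cond_true, Bool.cond_false]
            omega
          · rw [hcf] at f1; exact absurd rfl f1
      · exact absurd rfl hww
  · have hnEv : ¬ Ev P i j d s := fun hE => hr (hEv.mp hE).1
    refine ⟨fun hE => absurd hE hnEv, fun _ => ?_⟩
    rw [habv, habv']
    have hka : (cond wa (0:ℕ) 1) ≤ 1 := by cases wa <;> simp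
    have hkb : (cond wb (0:ℕ) 1) ≤ 1 := by cases wb <;> simp
    rcases hstA with ⟨e1, e2, e3⟩ | ⟨e1, e2, e3, e4⟩ <;>
      rcases hstB with ⟨f1, f2, f3⟩ | ⟨f1, f2, f3, f4⟩ <;>
      omega

end PipeDream
namespace PipeDream

variable {n : ℕ}

theorem alive (P : PipeDream n) {k e : ℕ} {w : Bool}
    (hT : P.traj k (k + e) = some (0, e, w)) {t : ℕ} (ht : t ≤ k + e) :
    ∃ r c : ℕ, ∃ w' : Bool, P.traj k t = some (r, c, w') := by
  cases h : P.traj k t with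
  | none =>
    rw [P.traj_none_mono h ht] at hT
    cases hT
  | some s =>
    obtain ⟨r, c, w⟩ := s
    exact ⟨r, c, w, rfl⟩

theorem pair_keep (P : PipeDream n) {i j d ei ej : ℕ} {wi wj : Bool}
    (hij : i + d = j) (hd : 0 < d) (hjn : j < n)
    (hTi : P.traj i (i + ei) = some (0, ei, wi))
    (hTj : P.traj j (j + ej) = some (0, ej, wj)) :
    ∀ t s : ℕ, s ≤ t → t ≤ i + min ei ej →
      (∀ u, s ≤ u → u < t → ¬ Ev P i j d u) → (Abv P i j d t ↔ Abv P i j d s) := by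
  intro t
  induction t with
  | zero =>
    intro s hs _ _
    rw [Nat.le_zero.mp hs]
  | succ t ih =>
    intro s hs hle hnE
    rcases Nat.lt_or_ge s (t + 1) with h' | h'
    · have hs' : s ≤ t := by omega
      have h1 : Abv P i j d (t + 1) ↔ Abv P i j d t := by
        obtain ⟨ra, ca, wa, ha⟩ := P.alive hTi (t := t) (by omega)
        obtain ⟨ra', ca', wa', ha'⟩ := P.alive hTi (t := t + 1) (by omega)
        obtain ⟨rb, cb, wb, hb⟩ := P.alive hTj (t := t + d) (by omega)
        obtain ⟨rb', cb', wb', hb'⟩ := P.alive hTj (t := t + d + 1) (by omega)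
        exact (P.pair_step hij hd hjn ha hb ha' hb').2 (hnE t hs' (by omega))
      rw [h1]
      exact ih s hs' (by omega) (fun u hu hu' => hnE u hu (by omega))
    · have : s = t + 1 := by omega
      rw [this]

theorem Ev_states (P : PipeDream n) {i j d s : ℕ} (hij : i + d = j) (hd : 0 < d)
    (hjn : j < n) (hE : Ev P i j d s) :
    ∃ r c : ℕ, ∃ wa : Bool, P.traj i s = some (r, c, wa) ∧
      P.traj j (s + d) = some (r, c, !wa) ∧ P.cross r c = true ∧
      ((wa = true ∧ P.west r c = i ∧ P.south r c = j) ∨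
        (wa = false ∧ P.west r c = j ∧ P.south r c = i)) := by
  have hin : i < n := by omega
  obtain ⟨r, c, wa, wb, h1, h2, hcr⟩ := hE
  have hww : wa ≠ wb := by
    intro h
    subst h
    have := P.state_ne hin hjn h1 h2
    omega
  have hwb : wb = !wa := by cases wa <;> cases wb <;> simp_all
  subst hwb
  refine ⟨r, c, wa, h1, h2, hcr, ?_⟩
  obtain ⟨-, -, hw1, hs1⟩ := P.traj_inv hin h1
  obtain ⟨-, -, hw2, hs2⟩ := P.traj_inv hjn h2
  cases wa with
  | true => exact Or.inl ⟨rfl, hw1 rfl, (hs2 (by simp)).2⟩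
  | false => exact Or.inr ⟨rfl, hw2 (by simp), (hs1 rfl).2⟩

theorem Ev_unique (P : PipeDream n) (hred : P.Reduced) {i j d s s' : ℕ}
    (hij : i + d = j) (hd : 0 < d) (hjn : j < n)
    (hE : Ev P i j d s) (hE' : Ev P i j d s') : s = s' := by
  have hin : i < n := by omega
  obtain ⟨r, c, wa, h1, h2, hcr, hor⟩ := P.Ev_states hij hd hjn hE
  obtain ⟨r', c', wa', h1', h2', hcr', hor'⟩ := P.Ev_states hij hd hjn hE'
  by_contra hss
  have hbox : (r, c) ≠ (r', c') := by
    intro hb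
    simp only [Prod.mk.injEq] at hb
    obtain ⟨rfl, rfl⟩ := hb
    have d1 : c + i = s + r := (P.traj_inv hin h1).1
    have d2 : c + i = s' + r := (P.traj_inv hin h1').1
    omega
  refine hred r c r' c' hcr hcr' hbox ?_
  rcases hor with ⟨-, hw, hs⟩ | ⟨-, hw, hs⟩ <;>
    rcases hor' with ⟨-, hw', hs'⟩ | ⟨-, hw', hs'⟩
  · exact Or.inl ⟨by rw [hw, hw'], by rw [hs, hs']⟩
  · exact Or.inr ⟨by rw [hw, hs'], by rw [hs, hw']⟩
  · exact Or.inr ⟨by rw [hw, hs'], by rw [hs, hw']⟩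
  · exact Or.inl ⟨by rw [hw, hw'], by rw [hs, hs']⟩

theorem abv_zero (P : PipeDream n) {i j d ej : ℕ} {wj : Bool}
    (hij : i + d = j) (hd : 0 < d) (hjn : j < n)
    (hTj : P.traj j (j + ej) = some (0, ej, wj)) :
    Abv P i j d 0 := by
  have hin : i < n := by omega
  have h1 : P.traj i 0 = some (i, 0, true) := rfl
  obtain ⟨r2, c2, w2, h2⟩ := P.alive hTj (t := 0 + d) (by omega)
  have hd2 : c2 + j = 0 + d + r2 := (P.traj_inv hjn h2).1
  rw [Abv, P.posAt_eq h1, P.posAt_eq h2]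
  rcases Nat.lt_or_ge i r2 with hr | hr
  · cases w2 <;> simp <;> omega
  · have hr2 : r2 = i ∧ c2 = 0 := by omega
    obtain ⟨rfl, rfl⟩ := hr2
    have hw2 : w2 = false := by
      cases hww : w2
      · rfl
      · rw [hww] at h2
        have := P.state_ne hin hjn h1 h2
        omega
    subst hw2
    simp

/-- Endgame when pipe `i` exits first. -/
theorem end_i (P : PipeDream n) {i j d ei ej : ℕ} {wi wj : Bool}
    (hij : i + d = j) (hd : 0 < d) (hjn : j < n)
    (hTi : P.traj i (i + ei) = some (0, ei, wi))
    (hNi : P.traj i (i + ei + 1) = none)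
    (hTj : P.traj j (j + ej) = some (0, ej, wj))
    (hee : ei < ej) :
    (Ev P i j d (i + ei) → ¬ Abv P i j d (i + ei)) ∧
    (¬ Ev P i j d (i + ei) → Abv P i j d (i + ei)) := by
  have hin : i < n := by omega
  set S := i + ei with hS
  obtain ⟨r2, c2, w2, h2⟩ := P.alive hTj (t := S + d) (by omega)
  have hd2 : c2 + j = S + d + r2 := (P.traj_inv hjn h2).1
  have hc2 : c2 = ei + r2 := by omega
  have hcw : P.cross 0 ei ≠ wi := by
    intro hc
    rw [traj, hTi, Option.bind_some, step] at hNi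
    dsimp only at hNi
    rw [if_pos hc] at hNi
    cases hNi
  rcases Nat.eq_zero_or_pos r2 with hr2 | hr2
  · subst hr2
    have hc2' : c2 = ei := by omega
    rw [hc2'] at h2
    have hww : w2 ≠ wi := by
      intro h
      subst h
      have := P.state_ne hjn hin h2 hTi
      omega
    have hw2 : w2 = !wi := by
      cases wi <;> cases w2
      · exact absurd rfl hww
      · rfl
      · rfl
      · exact absurd rfl hww
    subst hw2
    cases hwi : wi
    · -- wi = false: crossing at the exit box
      rw [hwi] at hTi hcw h2
      have hcr : P.cross 0 ei = true := by
        cases h : P.cross 0 ei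
        · exact absurd h hcw
        · rfl
      constructor
      · intro _
        rw [Abv, P.posAt_eq hTi, P.posAt_eq h2]
        simp
      · intro hnE
        exact absurd ⟨0, ei, false, true, hTi, h2, hcr⟩ hnE
    · -- wi = true: elbow at the exit box
      rw [hwi] at hTi hcw h2
      have hcr : P.cross 0 ei = false := by
        cases h : P.cross 0 ei
        · rfl
        · exact absurd h hcw
      constructor
      · rintro hE
        obtain ⟨r, c, wa, ha, hb, hcr', -⟩ := P.Ev_states hij hd hjn hE
        rw [hTi] at ha
        simp only [Option.some.injEq, Prod.mk.injEq] at ha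
        obtain ⟨rfl, rfl, rfl⟩ := ha
        rw [hcr] at hcr'
        exact Bool.noConfusion hcr'
      · intro _
        rw [Abv, P.posAt_eq hTi, P.posAt_eq h2]
        simp
  · have hnE : ¬ Ev P i j d S := by
      rintro hE
      obtain ⟨r, c, wa, ha, hb, -, -⟩ := P.Ev_states hij hd hjn hE
      rw [hTi] at ha
      rw [h2] at hb
      simp only [Option.some.injEq, Prod.mk.injEq] at ha hb
      omega
    refine ⟨fun hE => absurd hE hnE, fun _ => ?_⟩
    rw [Abv, P.posAt_eq hTi, P.posAt_eq h2]
    cases wi <;> cases w2 <;> simp <;> omega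

/-- Endgame when pipe `j` exits first. -/
theorem end_j (P : PipeDream n) {i j d ei ej : ℕ} {wi wj : Bool}
    (hij : i + d = j) (hd : 0 < d) (hjn : j < n)
    (hTi : P.traj i (i + ei) = some (0, ei, wi))
    (hTj : P.traj j (j + ej) = some (0, ej, wj))
    (hNj : P.traj j (j + ej + 1) = none)
    (hee : ej < ei) :
    (Ev P i j d (i + ej) → Abv P i j d (i + ej)) ∧
    (¬ Ev P i j d (i + ej) → ¬ Abv P i j d (i + ej)) := by
  have hin : i < n := by omega
  set S := i + ej with hS
  have hSd : S + d = j + ej := by omega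
  have h2 : P.traj j (S + d) = some (0, ej, wj) := by rw [hSd]; exact hTj
  obtain ⟨r1, c1, w1, h1⟩ := P.alive hTi (t := S) (by omega)
  have hd1 : c1 + i = S + r1 := (P.traj_inv hin h1).1
  have hc1 : c1 = ej + r1 := by omega
  have hcw : P.cross 0 ej ≠ wj := by
    intro hc
    rw [traj, hTj, Option.bind_some, step] at hNj
    dsimp only at hNj
    rw [if_pos hc] at hNj
    cases hNj
  rcases Nat.eq_zero_or_pos r1 with hr1 | hr1
  · subst hr1
    have hc1' : c1 = ej := by omega
    rw [hc1'] at h1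
    have hww : w1 ≠ wj := by
      intro h
      subst h
      have := P.state_ne hin hjn h1 h2
      omega
    have hw1 : w1 = !wj := by
      cases wj <;> cases w1
      · exact absurd rfl hww
      · rfl
      · rfl
      · exact absurd rfl hww
    subst hw1
    cases hwj : wj
    · -- wj = false: crossing at j's exit box, i is the west pipe
      rw [hwj] at hTj hcw h2
      have hcr : P.cross 0 ej = true := by
        cases h : P.cross 0 ej
        · exact absurd h hcw
        · rfl
      rw [hwj] at h1
      constructor
      · intro _
        rw [Abv, P.posAt_eq h1, P.posAt_eq h2]
        simp
      · intro hnE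
        exact absurd ⟨0, ej, true, false, h1, h2, hcr⟩ hnE
    · -- wj = true: elbow at j's exit box
      rw [hwj] at hTj hcw h2
      rw [hwj] at h1
      have hcr : P.cross 0 ej = false := by
        cases h : P.cross 0 ej
        · rfl
        · exact absurd h hcw
      constructor
      · rintro hE
        obtain ⟨r, c, wa, ha, hb, hcr', -⟩ := P.Ev_states hij hd hjn hE
        rw [h1] at ha
        simp only [Option.some.injEq, Prod.mk.injEq] at ha
        obtain ⟨rfl, rfl, rfl⟩ := ha
        rw [hcr] at hcr'
        exact Bool.noConfusion hcr'
      · intro _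
        rw [Abv, P.posAt_eq h1, P.posAt_eq h2]
        simp
  · have hnE : ¬ Ev P i j d S := by
      rintro hE
      obtain ⟨r, c, wa, ha, hb, -, -⟩ := P.Ev_states hij hd hjn hE
      rw [h1] at ha
      rw [h2] at hb
      simp only [Option.some.injEq, Prod.mk.injEq] at ha hb
      omega
    refine ⟨fun hE => absurd hE hnE, fun _ hA => ?_⟩
    rw [Abv, P.posAt_eq h1, P.posAt_eq h2] at hA
    cases w1 <;> cases wj <;> simp at hA <;> omega

/-- Any crossing between pipes `i` and `j` is an event. -/
theorem cross_event (P : PipeDream n) {i j d ei ej : ℕ} {wi wj : Bool}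
    (hij : i + d = j) (hd : 0 < d) (hjn : j < n)
    (hTi : P.traj i (i + ei) = some (0, ei, wi))
    (hNi : P.traj i (i + ei + 1) = none)
    (hTj : P.traj j (j + ej) = some (0, ej, wj))
    (hNj : P.traj j (j + ej + 1) = none)
    {r c : ℕ} (hcr : P.cross r c = true)
    (hor : (P.west r c = i ∧ P.south r c = j) ∨ (P.west r c = j ∧ P.south r c = i)) :
    ∃ s, s ≤ i + min ei ej ∧ Ev P i j d s := by
  have hin : i < n := by omega
  have hsh := P.inShape r c hcr
  obtain ⟨-, t1, ht1⟩ := P.west_traj (r := r) (c := c) (by omega)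
  obtain ⟨-, t2, ht2⟩ := P.south_traj (r := r) (c := c) (by omega)
  rcases hor with ⟨hw, hs⟩ | ⟨hw, hs⟩
  · rw [hw] at ht1
    rw [hs] at ht2
    have d1 : c + i = t1 + r := (P.traj_inv hin ht1).1
    have d2 : c + j = t2 + r := (P.traj_inv hjn ht2).1
    have ht1e : t1 ≤ i + ei := by
      have := (P.traj_ne_none_iff hTi hNi (t := t1)).mp (by rw [ht1]; simp)
      omega
    have ht2e : t2 ≤ j + ej := by
      have := (P.traj_ne_none_iff hTj hNj (t := t2)).mp (by rw [ht2]; simp)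
      omega
    refine ⟨t1, by omega, r, c, true, false, ht1, ?_, hcr⟩
    rw [show t1 + d = t2 by omega]
    exact ht2
  · rw [hw] at ht1
    rw [hs] at ht2
    have d1 : c + j = t1 + r := (P.traj_inv hjn ht1).1
    have d2 : c + i = t2 + r := (P.traj_inv hin ht2).1
    have ht1e : t1 ≤ j + ej := by
      have := (P.traj_ne_none_iff hTj hNj (t := t1)).mp (by rw [ht1]; simp)
      omega
    have ht2e : t2 ≤ i + ei := by
      have := (P.traj_ne_none_iff hTi hNi (t := t2)).mp (by rw [ht2]; simp)
      omega
    refine ⟨t2, by omega, r, c, false, true, ht2, ?_, hcr⟩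
    rw [show t2 + d = t1 by omega]
    exact ht1

end PipeDream
namespace PipeDream

variable {n : ℕ}

theorem Ev_le (P : PipeDream n) {i j d ei ej : ℕ} {wi wj : Bool}
    (hij : i + d = j) (hd : 0 < d) (hjn : j < n)
    (hTi : P.traj i (i + ei) = some (0, ei, wi)) (hNi : P.traj i (i + ei + 1) = none)
    (hTj : P.traj j (j + ej) = some (0, ej, wj)) (hNj : P.traj j (j + ej + 1) = none)
    {s : ℕ} (hE : Ev P i j d s) : s ≤ i + min ei ej := by
  obtain ⟨r, c, wa, wb, h1, h2, -⟩ := hE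
  have e1 : s ≤ i + ei := by
    have := (P.traj_ne_none_iff hTi hNi (t := s)).mp (by rw [h1]; simp)
    omega
  have e2 : s + d ≤ j + ej := by
    have := (P.traj_ne_none_iff hTj hNj (t := s + d)).mp (by rw [h2]; simp)
    omega
  omega

theorem pair_analysis (P : PipeDream n) (hred : P.Reduced)
    {i j d ei ej : ℕ} {wi wj : Bool}
    (hij : i + d = j) (hd : 0 < d) (hjn : j < n)
    (hTi : P.traj i (i + ei) = some (0, ei, wi)) (hNi : P.traj i (i + ei + 1) = none)
    (hTj : P.traj j (j + ej) = some (0, ej, wj)) (hNj : P.traj j (j + ej + 1) = none)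
    (hne : ei ≠ ej) :
    (ej < ei ↔ ∃ r c : ℕ, P.cross r c = true ∧ P.west r c = i ∧ P.south r c = j) ∧
    (∀ r c : ℕ, P.cross r c = true → ¬(P.west r c = j ∧ P.south r c = i)) := by
  have hin : i < n := by omega
  have hA0 : Abv P i j d 0 := P.abv_zero hij hd hjn hTj
  have main : (∃ s, Ev P i j d s) →
      ej < ei ∧ ∃ r c : ℕ, P.cross r c = true ∧ P.west r c = i ∧ P.south r c = j := by
    rintro ⟨s0, hE0⟩
    have hs0S : s0 ≤ i + min ei ej := P.Ev_le hij hd hjn hTi hNi hTj hNj hE0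
    have hOnly : ∀ u, u ≠ s0 → ¬ Ev P i j d u := by
      intro u hu hEu
      exact hu (P.Ev_unique hred hij hd hjn hEu hE0)
    have hAs0 : Abv P i j d s0 := by
      rw [P.pair_keep hij hd hjn hTi hTj s0 0 (Nat.zero_le _) hs0S
        (fun u _ hu => hOnly u (by omega))]
      exact hA0
    have horient : ∃ r c : ℕ, P.cross r c = true ∧ P.west r c = i ∧ P.south r c = j := by
      obtain ⟨r, c, wa, h1, h2, hcr, hor⟩ := P.Ev_states hij hd hjn hE0
      rcases hor with ⟨-, hw, hs⟩ | ⟨hwa, -, -⟩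
      · exact ⟨r, c, hcr, hw, hs⟩
      · subst hwa
        rw [Abv, P.posAt_eq h1, P.posAt_eq h2] at hAs0
        simp at hAs0
    refine ⟨?_, horient⟩
    by_contra hee'
    have hee : ei < ej := by omega
    have hSmin : min ei ej = ei := by omega
    rw [hSmin] at hs0S
    rcases Nat.lt_or_ge s0 (i + ei) with hlt | hge
    · -- the event is strictly before pipe i exits
      have hnES : ¬ Ev P i j d (i + ei) := hOnly _ (by omega)
      have hAS : Abv P i j d (i + ei) :=
        (P.end_i hij hd hjn hTi hNi hTj hee).2 hnES
      -- but the order flips at s0 and stays flipped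
      have hflip : ¬ Abv P i j d (s0 + 1) := by
        obtain ⟨ra, ca, wa, ha⟩ := P.alive hTi (t := s0) (by omega)
        obtain ⟨ra', ca', wa', ha'⟩ := P.alive hTi (t := s0 + 1) (by omega)
        obtain ⟨rb, cb, wb, hb⟩ := P.alive hTj (t := s0 + d) (by omega)
        obtain ⟨rb', cb', wb', hb'⟩ := P.alive hTj (t := s0 + d + 1) (by omega)
        rw [(P.pair_step hij hd hjn ha hb ha' hb').1 hE0]
        exact fun h => h hAs0
      have : Abv P i j d (i + ei) ↔ Abv P i j d (s0 + 1) :=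
        P.pair_keep hij hd hjn hTi hTj (i + ei) (s0 + 1) (by omega) (by omega)
          (fun u hu _ => hOnly u (by omega))
      rw [this] at hAS
      exact hflip hAS
    · -- the event happens exactly when pipe i exits
      have hs0 : s0 = i + ei := by omega
      subst hs0
      exact (P.end_i hij hd hjn hTi hNi hTj hee).1 hE0 hAs0
  have main2 : ej < ei → ∃ s, Ev P i j d s := by
    intro hee
    by_contra hno
    push_neg at hno
    have hSmin : min ei ej = ej := by omega
    have hAS : Abv P i j d (i + ej) := by
      rw [P.pair_keep hij hd hjn hTi hTj (i + ej) 0 (Nat.zero_le _) (by omega)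
        (fun u _ _ => hno u)]
      exact hA0
    exact (P.end_j hij hd hjn hTi hTj hNj hee).2 (hno _) hAS
  constructor
  · constructor
    · intro hee
      exact (main (main2 hee)).2
    · rintro ⟨r, c, hcr, hw, hs⟩
      refine (main ?_).1
      obtain ⟨s, -, hE⟩ := P.cross_event hij hd hjn hTi hNi hTj hNj hcr (Or.inl ⟨hw, hs⟩)
      exact ⟨s, hE⟩
  · rintro r c hcr ⟨hw, hs⟩
    obtain ⟨s, -, hE⟩ := P.cross_event hij hd hjn hTi hNi hTj hNj hcr (Or.inr ⟨hw, hs⟩)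
    obtain ⟨-, r', c', hcr', hw', hs'⟩ := main ⟨s, hE⟩
    have hbox : (r, c) ≠ (r', c') := by
      intro hb
      simp only [Prod.mk.injEq] at hb
      obtain ⟨rfl, rfl⟩ := hb
      rw [hw] at hw'
      omega
    exact hred r c r' c' hcr hcr' hbox (Or.inr ⟨by rw [hw, hs'], by rw [hs, hw']⟩)

end PipeDream
namespace PipeDream

variable {n : ℕ}

def rowAt (P : PipeDream n) (k t : ℕ) : ℕ := ((P.traj k t).getD (0, 0, true)).1

def colAt (P : PipeDream n) (k t : ℕ) : ℕ := ((P.traj k t).getD (0, 0, true)).2.1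

def wAt (P : PipeDream n) (k t : ℕ) : Bool := ((P.traj k t).getD (0, 0, true)).2.2

theorem rowAt_eq (P : PipeDream n) {k t r c : ℕ} {w : Bool}
    (h : P.traj k t = some (r, c, w)) : P.rowAt k t = r := by rw [rowAt, h]; rfl

theorem colAt_eq (P : PipeDream n) {k t r c : ℕ} {w : Bool}
    (h : P.traj k t = some (r, c, w)) : P.colAt k t = c := by rw [colAt, h]; rfl

theorem wAt_eq (P : PipeDream n) {k t r c : ℕ} {w : Bool}
    (h : P.traj k t = some (r, c, w)) : P.wAt k t = w := by rw [wAt, h]; rfl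

/-- Indicator for pipe `k` being, at time `u`, on a tile of kind `(wt, ct)` :
west/south pipe according to `wt`, crossing/elbow according to `ct`. -/
def ind (P : PipeDream n) (k : ℕ) (wt ct : Bool) (u : ℕ) : ℕ :=
  if P.wAt k u = wt ∧ P.cross (P.rowAt k u) (P.colAt k u) = ct then 1 else 0

/-- The running tile counts along the trajectory of pipe `k`. -/
theorem running_counts (P : PipeDream n) {k e : ℕ} {w0 : Bool} (hk : k < n)
    (hT : P.traj k (k + e) = some (0, e, w0)) :
    ∀ t, t ≤ k + e →
      P.rowAt k t + (∑ u ∈ Finset.range t, (P.ind k true false u + P.ind k false true u)) = k ∧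
      P.colAt k t = (∑ u ∈ Finset.range t, (P.ind k false false u + P.ind k true true u)) ∧
      (∑ u ∈ Finset.range t, P.ind k true false u)
        = (∑ u ∈ Finset.range t, P.ind k false false u) + (cond (P.wAt k t) 0 1) := by
  intro t
  induction t with
  | zero =>
    intro _
    have h0 : P.traj k 0 = some (k, 0, true) := rfl
    rw [P.rowAt_eq h0, P.colAt_eq h0, P.wAt_eq h0]
    simp
  | succ t ih =>
    intro ht
    obtain ⟨hrow, hcol, hnwse⟩ := ih (by omega)
    obtain ⟨r, c, w, h⟩ := P.alive hT (t := t) (by omega)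
    obtain ⟨r', c', w', h'⟩ := P.alive hT (t := t + 1) (by omega)
    have er := P.rowAt_eq h
    have ec := P.colAt_eq h
    have ew := P.wAt_eq h
    have er' := P.rowAt_eq h'
    have ec' := P.colAt_eq h'
    have ew' := P.wAt_eq h'
    rw [Finset.sum_range_succ, Finset.sum_range_succ, Finset.sum_range_succ,
      Finset.sum_range_succ, er', ec', ew']
    rw [ew] at hnwse
    rcases P.traj_step h h' with ⟨e1, e2, e3, e4⟩ | ⟨e1, e2, e3, e4, e5⟩
    · -- east step
      rw [e2, e3, e4]
      cases w
      · -- southeast elbow at time t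
        have i1 : P.ind k true false t = 0 := by simp [ind, er, ec, ew, e1]
        have i2 : P.ind k false true t = 0 := by simp [ind, er, ec, ew, e1]
        have i3 : P.ind k false false t = 1 := by simp [ind, er, ec, ew, e1]
        have i4 : P.ind k true true t = 0 := by simp [ind, er, ec, ew, e1]
        rw [i1, i2, i3, i4]
        simp only [Bool.cond_false, Bool.cond_true] at hnwse ⊢
        omega
      · -- horizontal crossing at time t
        have i1 : P.ind k true false t = 0 := by simp [ind, er, ec, ew, e1]
        have i2 : P.ind k false true t = 0 := by simp [ind, er, ec, ew, e1]
        have i3 : P.ind k false false t = 0 := by simp [ind, er, ec, ew, e1]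
        have i4 : P.ind k true true t = 1 := by simp [ind, er, ec, ew, e1]
        rw [i1, i2, i3, i4]
        simp only [Bool.cond_false, Bool.cond_true] at hnwse ⊢
        omega
    · -- north step
      rw [e3, e4, e5]
      cases w
      · -- vertical crossing at time t
        have hcr : P.cross r c = true := by
          cases hcc : P.cross r c
          · exact absurd hcc e1
          · rfl
        have i1 : P.ind k true false t = 0 := by simp [ind, er, ec, ew, hcr]
        have i2 : P.ind k false true t = 1 := by simp [ind, er, ec, ew, hcr]
        have i3 : P.ind k false false t = 0 := by simp [ind, er, ec, ew, hcr]
        have i4 : P.ind k true true t = 0 := by simp [ind, er, ec, ew, hcr]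
        rw [i1, i2, i3, i4]
        simp only [Bool.cond_false, Bool.cond_true] at hnwse ⊢
        omega
      · -- northwest elbow at time t
        have hcr : P.cross r c = false := by
          cases hcc : P.cross r c
          · rfl
          · exact absurd hcc e1
        have i1 : P.ind k true false t = 1 := by simp [ind, er, ec, ew, hcr]
        have i2 : P.ind k false true t = 0 := by simp [ind, er, ec, ew, hcr]
        have i3 : P.ind k false false t = 0 := by simp [ind, er, ec, ew, hcr]
        have i4 : P.ind k true true t = 0 := by simp [ind, er, ec, ew, hcr]
        rw [i1, i2, i3, i4]
        simp only [Bool.cond_false, Bool.cond_true] at hnwse ⊢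
        omega

/-- The total tile counts of pipe `k`. -/
theorem total_counts (P : PipeDream n) {k e : ℕ} {w0 : Bool} (hk : k < n)
    (hT : P.traj k (k + e) = some (0, e, w0)) (hN : P.traj k (k + e + 1) = none) :
    (∑ u ∈ Finset.range (k + e + 1), P.ind k true false u)
        + (∑ u ∈ Finset.range (k + e + 1), P.ind k false true u) = k + 1 ∧
    (∑ u ∈ Finset.range (k + e + 1), P.ind k false false u)
        + (∑ u ∈ Finset.range (k + e + 1), P.ind k true true u) = e ∧
    (∑ u ∈ Finset.range (k + e + 1), P.ind k true false u)
        = (∑ u ∈ Finset.range (k + e + 1), P.ind k false false u) + 1 := by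
  obtain ⟨hrow, hcol, hnwse⟩ := P.running_counts hk hT (k + e) le_rfl
  have er := P.rowAt_eq hT
  have ec := P.colAt_eq hT
  have ew := P.wAt_eq hT
  rw [er] at hrow
  rw [ec] at hcol
  rw [ew] at hnwse
  rw [Finset.sum_add_distrib] at hrow hcol
  have hcw : P.cross 0 e ≠ w0 := by
    intro hc
    rw [traj, hT, Option.bind_some, step] at hN
    dsimp only at hN
    rw [if_pos hc] at hN
    cases hN
  rw [Finset.sum_range_succ, Finset.sum_range_succ, Finset.sum_range_succ,
    Finset.sum_range_succ]
  cases w0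
  · -- pipe exits through a crossing (it is the vertical pipe there)
    have hcr : P.cross 0 e = true := by
      cases hcc : P.cross 0 e
      · exact absurd hcc hcw
      · rfl
    have i1 : P.ind k true false (k + e) = 0 := by simp [ind, er, ec, ew, hcr]
    have i2 : P.ind k false true (k + e) = 1 := by simp [ind, er, ec, ew, hcr]
    have i3 : P.ind k false false (k + e) = 0 := by simp [ind, er, ec, ew, hcr]
    have i4 : P.ind k true true (k + e) = 0 := by simp [ind, er, ec, ew, hcr]
    rw [i1, i2, i3, i4]
    simp only [Bool.cond_false] at hnwse
    omega
  · -- pipe exits through an elbow (a northwest elbow)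
    have hcr : P.cross 0 e = false := by
      cases hcc : P.cross 0 e
      · rfl
      · exact absurd hcc hcw
    have i1 : P.ind k true false (k + e) = 1 := by simp [ind, er, ec, ew, hcr]
    have i2 : P.ind k false true (k + e) = 0 := by simp [ind, er, ec, ew, hcr]
    have i3 : P.ind k false false (k + e) = 0 := by simp [ind, er, ec, ew, hcr]
    have i4 : P.ind k true true (k + e) = 0 := by simp [ind, er, ec, ew, hcr]
    rw [i1, i2, i3, i4]
    simp only [Bool.cond_true] at hnwse
    omega

end PipeDream
namespace PipeDream

variable {n : ℕ}

theorem count_eq (P : PipeDream n) {k e : ℕ} {w0 : Bool}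
    (hT : P.traj k (k + e) = some (0, e, w0)) (hN : P.traj k (k + e + 1) = none)
    (wt ct : Bool) (S : Set (ℕ × ℕ))
    (hS : ∀ b : ℕ × ℕ, b ∈ S ↔
      (P.cross b.1 b.2 = ct ∧ ∃ t, P.traj k t = some (b.1, b.2, wt)))
    (hk : k < n) :
    ∃ Fb : Finset (ℕ × ℕ), S = ↑Fb ∧
      Fb.card = ∑ u ∈ Finset.range (k + e + 1), P.ind k wt ct u := by
  classical
  set F : Finset ℕ := (Finset.range (k + e + 1)).filter
    (fun u => P.wAt k u = wt ∧ P.cross (P.rowAt k u) (P.colAt k u) = ct) with hF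
  refine ⟨F.image (fun u => (P.rowAt k u, P.colAt k u)), ?_, ?_⟩
  · ext b
    simp only [Finset.coe_image, Set.mem_image, Finset.mem_coe, hF, Finset.mem_filter,
      Finset.mem_range, hS b]
    constructor
    · rintro ⟨hcr, t, ht⟩
      have htle : t ≤ k + e := by
        have := (P.traj_ne_none_iff hT hN (t := t)).mp (by rw [ht]; simp)
        omega
      refine ⟨t, ⟨by omega, P.wAt_eq ht, ?_⟩, ?_⟩
      · rw [P.rowAt_eq ht, P.colAt_eq ht]
        exact hcr
      · rw [P.rowAt_eq ht, P.colAt_eq ht]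
    · rintro ⟨u, ⟨hu, hw, hc⟩, hb⟩
      obtain ⟨r, c, w, h⟩ := P.alive hT (t := u) (by omega)
      rw [P.rowAt_eq h, P.colAt_eq h] at hb hc
      rw [P.wAt_eq h] at hw
      subst hw
      subst hb
      exact ⟨hc, u, h⟩
  · rw [Finset.card_image_of_injOn, hF, Finset.card_filter]
    · exact Finset.sum_congr rfl (fun u _ => rfl)
    · intro u hu u' hu' huv
      have huv' : (P.rowAt k u, P.colAt k u) = (P.rowAt k u', P.colAt k u') := huv
      rw [hF] at hu hu'
      simp only [Finset.mem_coe, Finset.mem_filter, Finset.mem_range] at hu hu'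
      obtain ⟨r, c, w, h⟩ := P.alive hT (t := u) (by omega)
      obtain ⟨r', c', w', h'⟩ := P.alive hT (t := u') (by omega)
      rw [P.rowAt_eq h, P.colAt_eq h, P.rowAt_eq h', P.colAt_eq h'] at huv'
      simp only [Prod.mk.injEq] at huv'
      obtain ⟨rfl, rfl⟩ := huv'
      have d1 : c + k = u + r := (P.traj_inv hk h).1
      have d2 : c + k = u' + r := (P.traj_inv hk h').1
      omega

/-- A pipe never crosses itself. -/
theorem no_self_cross (P : PipeDream n) {r c : ℕ} (hcr : P.cross r c = true) :
    P.west r c ≠ P.south r c := by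
  have hsh := P.inShape r c hcr
  obtain ⟨hwlt, t1, ht1⟩ := P.west_traj (r := r) (c := c) (by omega)
  obtain ⟨hslt, t2, ht2⟩ := P.south_traj (r := r) (c := c) (by omega)
  intro hws
  rw [hws] at ht1
  have d1 : c + P.south r c = t1 + r := (P.traj_inv hslt ht1).1
  have d2 : c + P.south r c = t2 + r := (P.traj_inv hslt ht2).1
  have : t1 = t2 := by omega
  subst this
  rw [ht1] at ht2
  simp at ht2

end PipeDream

/-- For any reduced pipe dream `P ∈ Π(ω)` and any pipe `j`, pipe `j`
of `P` has exactly `ninv ω j` southeast elbows, exactly `1 + ninv ω j` northwest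
elbows, exactly `j - 1 - ninv ω j` crossings at which it is the vertical pipe, and
exactly `ω⁻¹ j - 1 - ninv ω j` crossings at which it is the horizontal pipe.
(Everything here is `0`-indexed: pipe `j` enters at the `0`-indexed row `j.val` and
exits at the `0`-indexed column `(ω⁻¹ j).val`, so the counts of vertical and
horizontal crossings are `j.val - ninv ω j` and `(ω⁻¹ j).val - ninv ω j`.
A northwest elbow of a pipe is a box where it enters travelling east and leaves
travelling north, i.e. an elbow box, possibly an antidiagonal half-box, where it is
the west pipe; a southeast elbow is a box where it enters travelling north and
leaves travelling east, i.e. a full elbow box where it is the south pipe.) -/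
theorem pipe_tile_counts (n : ℕ) (ω : Equiv.Perm (Fin n)) (P : PipeDream n)
    (hred : P.Reduced) (hexit : P.HasExitPerm ω) (j : Fin n) :
    {b : ℕ × ℕ | b.1 + b.2 + 2 ≤ n ∧ P.cross b.1 b.2 = false ∧
        P.south b.1 b.2 = j.val}.ncard = ninv ω j ∧
    {b : ℕ × ℕ | b.1 + b.2 + 1 ≤ n ∧ P.cross b.1 b.2 = false ∧
        P.west b.1 b.2 = j.val}.ncard = 1 + ninv ω j ∧
    {b : ℕ × ℕ | P.cross b.1 b.2 = true ∧ P.south b.1 b.2 = j.val}.ncard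
        = j.val - ninv ω j ∧
    {b : ℕ × ℕ | P.cross b.1 b.2 = true ∧ P.west b.1 b.2 = j.val}.ncard
        = (ω⁻¹ j).val - ninv ω j := by
  classical
  open PipeDream in
  -- exit data for every pipe
  have hexists : ∀ i : Fin n, ∃ w : Bool,
      P.traj i.val (i.val + (ω⁻¹ i).val) = some (0, (ω⁻¹ i).val, w) ∧
      P.traj i.val (i.val + (ω⁻¹ i).val + 1) = none := by
    intro i
    obtain ⟨e, w, hen, hTe, hNe, hcw, hep⟩ := P.exists_exit i.isLt
    have hen' : e < n := by omega
    have h1 : P.exitPipe e = (ω ⟨e, hen'⟩).val := hexit ⟨e, hen'⟩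
    have h2 : ω ⟨e, hen'⟩ = i := Fin.ext (by omega)
    have h3 : ω⁻¹ i = ⟨e, hen'⟩ := by rw [← h2, Equiv.Perm.inv_def, Equiv.symm_apply_apply]
    exact ⟨w, by rw [h3]; exact hTe, by rw [h3]; exact hNe⟩
  choose W hT hN using hexists
  have jlt : j.val < n := j.isLt
  -- the pair analysis, specialised to pipe `j` and a smaller or larger pipe
  have hEne : ∀ i : Fin n, i ≠ j → (ω⁻¹ i).val ≠ (ω⁻¹ j).val := by
    intro i hij hv
    exact hij (by
      have : ω⁻¹ i = ω⁻¹ j := Fin.ext hv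
      simpa using congrArg ω this)
  have pairA : ∀ i : Fin n, i.val < j.val →
      (((ω⁻¹ j).val < (ω⁻¹ i).val ↔
        ∃ r c : ℕ, P.cross r c = true ∧ P.west r c = i.val ∧ P.south r c = j.val) ∧
      (∀ r c : ℕ, P.cross r c = true →
        ¬(P.west r c = j.val ∧ P.south r c = i.val))) := by
    intro i hij
    exact P.pair_analysis hred (d := j.val - i.val) (by omega) (by omega) jlt
      (hT i) (hN i) (hT j) (hN j) (hEne i (by intro h; rw [h] at hij; omega))
  have pairB : ∀ i : Fin n, j.val < i.val →
      (((ω⁻¹ i).val < (ω⁻¹ j).val ↔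
        ∃ r c : ℕ, P.cross r c = true ∧ P.west r c = j.val ∧ P.south r c = i.val) ∧
      (∀ r c : ℕ, P.cross r c = true →
        ¬(P.west r c = i.val ∧ P.south r c = j.val))) := by
    intro i hij
    exact P.pair_analysis hred (d := i.val - j.val) (by omega) (by omega) i.isLt
      (hT j) (hN j) (hT i) (hN i)
      ((hEne i (by intro h; rw [h] at hij; omega)).symm)
  -- characterisation of the partners at vertical crossings of pipe `j`
  have hchar : ∀ r c : ℕ, P.cross r c = true → P.south r c = j.val →
      ∀ hwn : P.west r c < n,
      (⟨P.west r c, hwn⟩ : Fin n) < j ∧ ω⁻¹ j < ω⁻¹ (⟨P.west r c, hwn⟩ : Fin n) := by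
    intro r c hcr hs hwn
    have hne : P.west r c ≠ j.val := by
      intro h
      exact P.no_self_cross hcr (by rw [h, hs])
    rcases Nat.lt_or_ge (P.west r c) j.val with hlt | hge
    · refine ⟨by rw [Fin.lt_def]; exact hlt, ?_⟩
      rw [Fin.lt_def]
      exact ((pairA ⟨P.west r c, hwn⟩ hlt).1).mpr ⟨r, c, hcr, rfl, hs⟩
    · have hgt : j.val < P.west r c := by omega
      exact absurd ⟨rfl, hs⟩ ((pairB ⟨P.west r c, hwn⟩ hgt).2 r c hcr)
  -- the four sets, via the trajectory of pipe `j`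
  have hSse : ∀ b : ℕ × ℕ,
      b ∈ {b : ℕ × ℕ | b.1 + b.2 + 2 ≤ n ∧ P.cross b.1 b.2 = false ∧
        P.south b.1 b.2 = j.val} ↔
      (P.cross b.1 b.2 = false ∧ ∃ t, P.traj j.val t = some (b.1, b.2, false)) := by
    intro b
    constructor
    · rintro ⟨hsh, hc, hs⟩
      obtain ⟨-, t, ht⟩ := P.south_traj hsh
      rw [hs] at ht
      exact ⟨hc, t, ht⟩
    · rintro ⟨hc, t, ht⟩
      obtain ⟨-, -, -, hs⟩ := P.traj_inv jlt ht
      exact ⟨(hs rfl).1, hc, (hs rfl).2⟩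
  have hSnw : ∀ b : ℕ × ℕ,
      b ∈ {b : ℕ × ℕ | b.1 + b.2 + 1 ≤ n ∧ P.cross b.1 b.2 = false ∧
        P.west b.1 b.2 = j.val} ↔
      (P.cross b.1 b.2 = false ∧ ∃ t, P.traj j.val t = some (b.1, b.2, true)) := by
    intro b
    constructor
    · rintro ⟨hsh, hc, hw⟩
      obtain ⟨-, t, ht⟩ := P.west_traj hsh
      rw [hw] at ht
      exact ⟨hc, t, ht⟩
    · rintro ⟨hc, t, ht⟩
      obtain ⟨-, hsh, hw, -⟩ := P.traj_inv jlt ht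
      exact ⟨hsh, hc, hw rfl⟩
  have hSv : ∀ b : ℕ × ℕ,
      b ∈ {b : ℕ × ℕ | P.cross b.1 b.2 = true ∧ P.south b.1 b.2 = j.val} ↔
      (P.cross b.1 b.2 = true ∧ ∃ t, P.traj j.val t = some (b.1, b.2, false)) := by
    intro b
    constructor
    · rintro ⟨hc, hs⟩
      obtain ⟨-, t, ht⟩ := P.south_traj (P.inShape b.1 b.2 hc)
      rw [hs] at ht
      exact ⟨hc, t, ht⟩
    · rintro ⟨hc, t, ht⟩
      obtain ⟨-, -, -, hs⟩ := P.traj_inv jlt ht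
      exact ⟨hc, (hs rfl).2⟩
  have hSh : ∀ b : ℕ × ℕ,
      b ∈ {b : ℕ × ℕ | P.cross b.1 b.2 = true ∧ P.west b.1 b.2 = j.val} ↔
      (P.cross b.1 b.2 = true ∧ ∃ t, P.traj j.val t = some (b.1, b.2, true)) := by
    intro b
    constructor
    · rintro ⟨hc, hw⟩
      have hsh := P.inShape b.1 b.2 hc
      obtain ⟨-, t, ht⟩ := P.west_traj (r := b.1) (c := b.2) (by omega)
      rw [hw] at ht
      exact ⟨hc, t, ht⟩
    · rintro ⟨hc, t, ht⟩
      obtain ⟨-, -, hw, -⟩ := P.traj_inv jlt ht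
      exact ⟨hc, hw rfl⟩
  obtain ⟨Fse, hFse, hcse⟩ := P.count_eq (hT j) (hN j) false false _ hSse jlt
  obtain ⟨Fnw, hFnw, hcnw⟩ := P.count_eq (hT j) (hN j) true false _ hSnw jlt
  obtain ⟨Fv, hFv, hcv⟩ := P.count_eq (hT j) (hN j) false true _ hSv jlt
  obtain ⟨Fh, hFh, hch⟩ := P.count_eq (hT j) (hN j) true true _ hSh jlt
  obtain ⟨tot1, tot2, tot3⟩ := P.total_counts jlt (hT j) (hN j)
  -- the vertical crossings of pipe `j` are in bijection with its coinversions
  have hVmem : ∀ b : ℕ × ℕ, b ∈ Fv ↔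
      (P.cross b.1 b.2 = true ∧ P.south b.1 b.2 = j.val) := by
    intro b
    rw [← Finset.mem_coe, ← hFv]
    exact Iff.rfl
  have hVcard : Fv.card =
      (Finset.univ.filter (fun i : Fin n => i < j ∧ ω⁻¹ j < ω⁻¹ i)).card := by
    refine Finset.card_bij
      (fun b hb => ⟨P.west b.1 b.2, by
        obtain ⟨hc, -⟩ := (hVmem b).mp hb
        exact (P.west_traj (r := b.1) (c := b.2)
          (by have := P.inShape b.1 b.2 hc; omega)).1⟩) ?_ ?_ ?_
    · intro b hb
      obtain ⟨hc, hs⟩ := (hVmem b).mp hb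
      simp only [Finset.mem_filter, Finset.mem_univ, true_and]
      exact hchar b.1 b.2 hc hs _
    · intro b1 hb1 b2 hb2 heq
      simp only [Fin.mk.injEq] at heq
      obtain ⟨hc1, hs1⟩ := (hVmem b1).mp hb1
      obtain ⟨hc2, hs2⟩ := (hVmem b2).mp hb2
      by_contra hne
      have hbne : (b1.1, b1.2) ≠ (b2.1, b2.2) := by
        intro h
        simp only [Prod.mk.injEq] at h
        exact hne (Prod.ext h.1 h.2)
      exact hred b1.1 b1.2 b2.1 b2.2 hc1 hc2 hbne
        (Or.inl ⟨heq, by rw [hs1, hs2]⟩)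
    · intro i hi
      simp only [Finset.mem_filter, Finset.mem_univ, true_and] at hi
      obtain ⟨hlt, hinv⟩ := hi
      rw [Fin.lt_def] at hlt hinv
      obtain ⟨r, c, hcr, hw, hs⟩ := ((pairA i hlt).1).mp hinv
      refine ⟨(r, c), (hVmem (r, c)).mpr ⟨hcr, hs⟩, ?_⟩
      exact Fin.ext hw
  -- counting the non-inversions
  have hninv : (Finset.univ.filter (fun i : Fin n => i < j ∧ ω⁻¹ j < ω⁻¹ i)).card
      + ninv ω j = j.val := by
    have hIio : (Finset.univ.filter (fun i : Fin n => i < j)).card = j.val := by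
      have : Finset.univ.filter (fun i : Fin n => i < j) = Finset.Iio j := by
        ext x
        simp
      rw [this, Fin.card_Iio]
    have hsplit := Finset.card_filter_add_card_filter_not
      (s := Finset.univ.filter (fun i : Fin n => i < j))
      (p := fun i : Fin n => ω⁻¹ i < ω⁻¹ j)
    rw [Finset.filter_filter, Finset.filter_filter] at hsplit
    have h1 : Finset.univ.filter (fun i : Fin n => i < j ∧ ¬ ω⁻¹ i < ω⁻¹ j)
        = Finset.univ.filter (fun i : Fin n => i < j ∧ ω⁻¹ j < ω⁻¹ i) := by
      ext i
      simp only [Finset.mem_filter, Finset.mem_univ, true_and, and_congr_right_iff]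
      intro hij
      have : ω⁻¹ i ≠ ω⁻¹ j := by
        intro h
        have : i = j := by simpa using congrArg ω h
        rw [this] at hij
        exact lt_irrefl _ hij
      omega
    rw [h1] at hsplit
    rw [hIio] at hsplit
    rw [ninv]
    omega
  -- final bookkeeping
  have e1 : {b : ℕ × ℕ | b.1 + b.2 + 2 ≤ n ∧ P.cross b.1 b.2 = false ∧
      P.south b.1 b.2 = j.val}.ncard
      = ∑ u ∈ Finset.range (j.val + (ω⁻¹ j).val + 1), P.ind j.val false false u := by
    rw [hFse, Set.ncard_coe_finset, hcse]
  have e2 : {b : ℕ × ℕ | b.1 + b.2 + 1 ≤ n ∧ P.cross b.1 b.2 = false ∧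
      P.west b.1 b.2 = j.val}.ncard
      = ∑ u ∈ Finset.range (j.val + (ω⁻¹ j).val + 1), P.ind j.val true false u := by
    rw [hFnw, Set.ncard_coe_finset, hcnw]
  have e3 : {b : ℕ × ℕ | P.cross b.1 b.2 = true ∧ P.south b.1 b.2 = j.val}.ncard
      = ∑ u ∈ Finset.range (j.val + (ω⁻¹ j).val + 1), P.ind j.val false true u := by
    rw [hFv, Set.ncard_coe_finset, hcv]
  have e4 : {b : ℕ × ℕ | P.cross b.1 b.2 = true ∧ P.west b.1 b.2 = j.val}.ncard
      = ∑ u ∈ Finset.range (j.val + (ω⁻¹ j).val + 1), P.ind j.val true true u := by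
    rw [hFh, Set.ncard_coe_finset, hch]
  rw [← hcv, hVcard] at e3
  refine ⟨?_, ?_, ?_, ?_⟩ <;> omega
end

section
/- Let ω ∈ S_n and P ∈ Π(ω). If i < j and ω⁻¹(i) < ω⁻¹(j), then there is a directed path from i to j in the contact graph P♯, i.e., i ⪯_P j. -/
namespace PipeDream

variable {n : ℕ}

theorem pipes_fst_zero (P : PipeDream n) (r : ℕ) : (P.pipes r 0).1 = r := by
  rw [pipes]; simp

theorem pipes_fst_succ (P : PipeDream n) (r c : ℕ) :
    (P.pipes r (c+1)).1 = if P.cross r c then (P.pipes r c).1 else (P.pipes r c).2 := by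
  conv_lhs => rw [pipes]
  simp

theorem pipes_snd (P : PipeDream n) (r c : ℕ) :
    (P.pipes r c).2 = if r + c + 2 ≤ n then
      (if P.cross (r+1) c then (P.pipes (r+1) c).2 else (P.pipes (r+1) c).1) else 0 := by
  conv_lhs => rw [pipes]
  split <;> simp_all

theorem pipes_bounds (P : PipeDream n) (r c : ℕ) :
    (r + c + 1 ≤ n → r ≤ (P.pipes r c).1 ∧ (P.pipes r c).1 ≤ n - 1) ∧
    (r + c + 2 ≤ n → r + 1 ≤ (P.pipes r c).2 ∧ (P.pipes r c).2 ≤ n - 1) := by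
  constructor
  · intro h
    match c with
    | 0 => rw [pipes_fst_zero]; omega
    | d+1 =>
      have IH := pipes_bounds P r d
      rw [pipes_fst_succ]
      split
      · have := IH.1 (by omega); omega
      · have := IH.2 (by omega); omega
  · intro h
    have IH := pipes_bounds P (r+1) c
    rw [pipes_snd]
    rw [if_pos h]
    split
    · rename_i hc
      have hs := P.inShape (r+1) c hc
      have := IH.2 (by omega); omega
    · have := IH.1 (by omega); omega
  termination_by (n - r) + c
  decreasing_by all_goals omega

theorem path_w (P : PipeDream n) (c : ℕ) : ∀ d, c ≤ d → d ≤ n - 1 →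
    P.Path (P.pipes 0 c).1 (P.pipes 0 d).1 := by
  intro d
  induction d with
  | zero => intro h _; interval_cases c; exact Relation.ReflTransGen.refl
  | succ d ih =>
    intro hcd hd
    rcases Nat.eq_or_lt_of_le hcd with h | h
    · subst h; exact Relation.ReflTransGen.refl
    · have hstep : P.Path (P.pipes 0 d).1 (P.pipes 0 (d+1)).1 := by
        rw [pipes_fst_succ]
        split
        · exact Relation.ReflTransGen.refl
        · rename_i hc
          exact Relation.ReflTransGen.single
            ⟨0, d, by omega, by simpa using hc, rfl, rfl⟩
      exact Relation.ReflTransGen.trans (ih (by omega) (by omega)) hstep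

theorem w_pos_mono (P : PipeDream n) (c : ℕ) : ∀ d, c ≤ d → d ≤ n - 1 →
    1 ≤ (P.pipes 0 c).1 → 1 ≤ (P.pipes 0 d).1 := by
  intro d
  induction d with
  | zero => intro h _ h1; interval_cases c; exact h1
  | succ d ih =>
    intro hcd hd h1
    rcases Nat.eq_or_lt_of_le hcd with h | h
    · subst h; exact h1
    · rw [pipes_fst_succ]
      split
      · exact ih (by omega) (by omega) h1
      · have := (pipes_bounds P 0 d).2 (by omega); omega

theorem trace (P : PipeDream n) : ∀ b, 1 ≤ (P.pipes 0 b).1 →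
    ∃ u, u < b ∧ P.cross 0 u = false ∧ (P.pipes 0 u).2 = (P.pipes 0 b).1 ∧
      ∀ d, u < d → d ≤ b → (P.pipes 0 d).1 = (P.pipes 0 b).1 := by
  intro b
  induction b with
  | zero => intro h1; rw [pipes_fst_zero] at h1; omega
  | succ b ih =>
    intro h1
    rw [pipes_fst_succ] at h1 ⊢
    by_cases hc : P.cross 0 b = true
    · rw [if_pos hc] at h1 ⊢
      obtain ⟨u, hu, he, hs, hall⟩ := ih h1
      refine ⟨u, by omega, he, hs, fun d hd1 hd2 => ?_⟩
      rcases Nat.eq_or_lt_of_le hd2 with h | h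
      · subst h; rw [pipes_fst_succ, if_pos hc]
      · exact hall d hd1 (by omega)
    · simp only [Bool.not_eq_true] at hc
      rw [if_neg (by simp [hc])] at h1 ⊢
      refine ⟨b, by omega, hc, rfl, fun d hd1 hd2 => ?_⟩
      have : d = b + 1 := by omega
      subst this
      rw [pipes_fst_succ, if_neg (by simp [hc])]

def Ew (P : PipeDream n) : ℕ → ℕ
  | d => if n - 1 ≤ d then n - 1 else if P.cross 0 d then Ew P (d+1) else d
  termination_by d => n - 1 - d
  decreasing_by omega

theorem Ew_le (P : PipeDream n) : ∀ d, Ew P d ≤ n - 1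
  | d => by
    rw [Ew]
    split
    · omega
    · split
      · exact Ew_le P (d+1)
      · omega
  termination_by d => n - 1 - d
  decreasing_by omega

theorem Ew_ge (P : PipeDream n) : ∀ d, d ≤ n - 1 → d ≤ Ew P d
  | d, h => by
    rw [Ew]
    split
    · omega
    · split
      · rename_i h1 h2
        have := Ew_ge P (d+1) (by omega)
        omega
      · omega
  termination_by d => n - 1 - d
  decreasing_by omega

theorem Ew_exit (P : PipeDream n) : ∀ d, d ≤ n - 1 →
    P.exitPipe (Ew P d) = (P.pipes 0 d).1
  | d, h => by
    rw [Ew]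
    split
    · rename_i h1
      have hd : d = n - 1 := by omega
      subst hd
      have hcr : P.cross 0 (n-1) = false := by
        by_contra hc
        simp only [Bool.not_eq_false] at hc
        have := P.inShape 0 (n-1) hc
        omega
      rw [exitPipe, if_neg (by simp [hcr])]
      rfl
    · split
      · rename_i h1 h2
        rw [Ew_exit P (d+1) (by omega), pipes_fst_succ, if_pos h2]
      · rename_i h1 h2
        rw [exitPipe, if_neg h2]
        rfl
  termination_by d => n - 1 - d
  decreasing_by all_goals omega

theorem Ew_not_cross (P : PipeDream n) : ∀ d, Ew P d < n - 1 → P.cross 0 (Ew P d) = false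
  | d => by
    rw [Ew]
    split
    · omega
    · split
      · exact fun h => Ew_not_cross P (d+1) h
      · rename_i h1 h2
        intro _
        simpa using h2
  termination_by d => n - 1 - d
  decreasing_by omega

theorem Ew_min (P : PipeDream n) : ∀ d e, d ≤ e → e ≤ n - 1 → P.cross 0 e = false →
    Ew P d ≤ e
  | d, e, hde, he, hce => by
    rw [Ew]
    split
    · omega
    · split
      · rename_i h1 h2
        have hne : d ≠ e := by rintro rfl; rw [h2] at hce; cases hce
        exact Ew_min P (d+1) e (by omega) he hce
      · omega
  termination_by d e _ _ _ => n - 1 - d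
  decreasing_by omega

theorem Ew_gt (P : PipeDream n) (d : ℕ) (hc : P.cross 0 d = true) (hd : d < n - 1) :
    d + 1 ≤ Ew P d := by
  rw [Ew, if_neg (by omega), if_pos hc]
  exact Ew_ge P (d+1) (by omega)


theorem exit_inj (P : PipeDream n) (ω : Equiv.Perm (Fin n)) (hexit : P.HasExitPerm ω)
    (e e' : ℕ) (he : e < n) (he' : e' < n) (h : P.exitPipe e = P.exitPipe e') : e = e' := by
  have h1 := hexit ⟨e, he⟩
  have h2 := hexit ⟨e', he'⟩
  simp only at h1 h2
  rw [h1, h2] at h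
  have : ω ⟨e, he⟩ = ω ⟨e', he'⟩ := Fin.ext h
  have := ω.injective this
  exact congrArg Fin.val this

theorem s_exit (P : PipeDream n) (c : ℕ) (hc : c + 2 ≤ n) :
    ∃ e, e ≤ n - 1 ∧ P.exitPipe e = (P.pipes 0 c).2 ∧
      (P.cross 0 c = true → e = c) ∧ (P.cross 0 c = false → e = Ew P (c+1)) := by
  by_cases h : P.cross 0 c = true
  · refine ⟨c, by omega, ?_, fun _ => rfl, fun h' => by simp [h] at h'⟩
    rw [exitPipe, if_pos h]; rfl
  · simp only [Bool.not_eq_true] at h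
    refine ⟨Ew P (c+1), Ew_le P (c+1), ?_, fun h' => by simp [h] at h', fun _ => rfl⟩
    rw [Ew_exit P (c+1) (by omega), pipes_fst_succ, if_neg (by simp [h])]

theorem s_inj (P : PipeDream n) (ω : Equiv.Perm (Fin n)) (hexit : P.HasExitPerm ω)
    (c c' : ℕ) (hc : c + 2 ≤ n) (hc' : c' + 2 ≤ n)
    (h : (P.pipes 0 c).2 = (P.pipes 0 c').2) : c = c' := by
  obtain ⟨e, he, hee, hcr, hel⟩ := s_exit P c hc
  obtain ⟨e', he', hee', hcr', hel'⟩ := s_exit P c' hc'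
  have hee2 : e = e' := by
    apply exit_inj P ω hexit e e' (by omega) (by omega)
    rw [hee, hee', h]
  -- now case analysis
  by_cases h1 : P.cross 0 c = true <;> by_cases h2 : P.cross 0 c' = true
  · rw [hcr h1, hcr' h2] at hee2; exact hee2
  · -- c crossing, c' elbow : e = c, e' = Ew (c'+1)
    exfalso
    simp only [Bool.not_eq_true] at h2
    rw [hcr h1] at hee2
    have hE := hel' h2
    rw [← hee2] at hE
    have : P.cross 0 (Ew P (c'+1)) = false := Ew_not_cross P (c'+1) (by omega)
    rw [← hE, h1] at this
    cases this
  · exfalso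
    simp only [Bool.not_eq_true] at h1
    rw [hcr' h2] at hee2
    have hE := hel h1
    rw [hee2] at hE
    have : P.cross 0 (Ew P (c+1)) = false := Ew_not_cross P (c+1) (by omega)
    rw [← hE, h2] at this
    cases this
  · simp only [Bool.not_eq_true] at h1 h2
    rw [hel h1, hel' h2] at hee2
    rcases Nat.lt_trichotomy c c' with hlt | heq | hgt
    · exfalso
      have hmin : Ew P (c+1) ≤ c' := Ew_min P (c+1) c' (by omega) (by omega) h2
      have hge : c' + 1 ≤ Ew P (c'+1) := Ew_ge P (c'+1) (by omega)
      omega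
    · exact heq
    · exfalso
      have hmin : Ew P (c'+1) ≤ c := Ew_min P (c'+1) c (by omega) (by omega) h1
      have hge : c + 1 ≤ Ew P (c+1) := Ew_ge P (c+1) (by omega)
      omega

def peel (P : PipeDream n) : PipeDream (n-1) where
  cross r c := P.cross (r+1) c
  inShape r c h := by have := P.inShape (r+1) c h; omega

theorem peel_pipes (P : PipeDream n) : ∀ r c : ℕ,
    ((peel P).pipes r c).1 = (P.pipes (r+1) c).1 - 1 ∧
    ((peel P).pipes r c).2 = (P.pipes (r+1) c).2 - 1
  | r, c => by
    constructor
    · match c with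
      | 0 => rw [pipes_fst_zero, pipes_fst_zero]; omega
      | d+1 =>
        rw [pipes_fst_succ, pipes_fst_succ]
        have hc : (peel P).cross r d = P.cross (r+1) d := rfl
        rw [hc]
        split
        · exact (peel_pipes P r d).1
        · exact (peel_pipes P r d).2
    · conv_lhs => rw [pipes_snd]
      conv_rhs => rw [pipes_snd]
      by_cases h : r + c + 3 ≤ n
      · rw [if_pos (show r + c + 2 ≤ n - 1 by omega), if_pos (show (r+1) + c + 2 ≤ n by omega)]
        have hc : (peel P).cross (r+1) c = P.cross (r+2) c := rfl
        rw [hc]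
        split
        · exact (peel_pipes P (r+1) c).2
        · exact (peel_pipes P (r+1) c).1
      · rw [if_neg (show ¬ (r + c + 2 ≤ n - 1) by omega), if_neg (show ¬ ((r+1) + c + 2 ≤ n) by omega)]
  termination_by r c => (n - r) + c
  decreasing_by all_goals omega

theorem peel_arc (P : PipeDream n) {x y : ℕ} (h : (peel P).Arc x y) :
    P.Arc (x+1) (y+1) := by
  obtain ⟨r, c, hsh, hcr, hw, hs⟩ := h
  have hW := (pipes_bounds P (r+1) c).1 (by omega)
  have hS := (pipes_bounds P (r+1) c).2 (by omega)
  have h1 := (peel_pipes P r c).1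
  have h2 := (peel_pipes P r c).2
  refine ⟨r+1, c, by omega, hcr, ?_, ?_⟩
  · rw [west] at hw ⊢; omega
  · rw [south] at hs ⊢; omega

theorem peel_path (P : PipeDream n) {x y : ℕ} (h : (peel P).Path x y) :
    P.Path (x+1) (y+1) :=
  Relation.ReflTransGen.lift (· + 1) (fun _ _ ha => peel_arc P ha) _ _ h

theorem peel_cross (P : PipeDream n) {r c x y : ℕ} (hcr : (peel P).cross r c = true)
    (hw : (peel P).west r c = x) (hs : (peel P).south r c = y) :
    P.cross (r+1) c = true ∧ P.west (r+1) c = x + 1 ∧ P.south (r+1) c = y + 1 := by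
  have hsh := (peel P).inShape r c hcr
  have hW := (pipes_bounds P (r+1) c).1 (by omega)
  have hS := (pipes_bounds P (r+1) c).2 (by omega)
  have h1 := (peel_pipes P r c).1
  have h2 := (peel_pipes P r c).2
  rw [west] at hw ⊢
  rw [south] at hs ⊢
  exact ⟨hcr, by omega, by omega⟩

theorem peel_reduced (P : PipeDream n) (hred : P.Reduced) : (peel P).Reduced := by
  intro r c r' c' h1 h2 hne
  have hsh1 := (peel P).inShape r c h1
  have hsh2 := (peel P).inShape r' c' h2
  have hW1 := (pipes_bounds P (r+1) c).1 (by omega)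
  have hS1 := (pipes_bounds P (r+1) c).2 (by omega)
  have hW2 := (pipes_bounds P (r'+1) c').1 (by omega)
  have hS2 := (pipes_bounds P (r'+1) c').2 (by omega)
  have e1 := (peel_pipes P r c).1
  have e2 := (peel_pipes P r c).2
  have e3 := (peel_pipes P r' c').1
  have e4 := (peel_pipes P r' c').2
  have := hred (r+1) c (r'+1) c' h1 h2 (by simp only [ne_eq, Prod.mk.injEq] at hne ⊢; omega)
  simp only [west, south] at this ⊢
  intro hcon
  apply this
  rcases hcon with ⟨ha, hb⟩ | ⟨ha, hb⟩
  · left; omega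
  · right; omega

theorem peel_exit (P : PipeDream n) (c : ℕ) (hc : c + 2 ≤ n) :
    (peel P).exitPipe c = (P.pipes 0 c).2 - 1 := by
  have h1 := (peel_pipes P 0 c).1
  have h2 := (peel_pipes P 0 c).2
  rw [exitPipe, pipes_snd P 0 c, if_pos (by omega : 0 + c + 2 ≤ n)]
  have hcc : (peel P).cross 0 c = P.cross 1 c := rfl
  rw [hcc]
  rw [pipes_snd P 1 c] at h2 ⊢
  split
  · rename_i hx
    rw [south, h2]
  · rename_i hx
    rw [west, h1]

theorem exists_peel_perm (P : PipeDream n) (ω : Equiv.Perm (Fin n))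
    (hexit : P.HasExitPerm ω) (hn : 2 ≤ n) :
    ∃ ω' : Equiv.Perm (Fin (n-1)), (peel P).HasExitPerm ω' ∧
      ∀ c : Fin (n-1), (ω' c).val = (P.pipes 0 c.val).2 - 1 := by
  have hbd : ∀ c : Fin (n-1), (P.pipes 0 c.val).2 - 1 < n - 1 := by
    intro c
    have := (pipes_bounds P 0 c.val).2 (by omega)
    omega
  let f : Fin (n-1) → Fin (n-1) := fun c => ⟨(P.pipes 0 c.val).2 - 1, hbd c⟩
  have hinj : Function.Injective f := by
    intro c c' h
    have h1 := (pipes_bounds P 0 c.val).2 (by omega)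
    have h2 := (pipes_bounds P 0 c'.val).2 (by omega)
    have hv : (P.pipes 0 c.val).2 - 1 = (P.pipes 0 c'.val).2 - 1 := congrArg Fin.val h
    have : (P.pipes 0 c.val).2 = (P.pipes 0 c'.val).2 := by omega
    have := s_inj P ω hexit c.val c'.val (by omega) (by omega) this
    exact Fin.ext this
  refine ⟨Equiv.ofBijective f (Finite.injective_iff_bijective.mp hinj), ?_, fun c => rfl⟩
  intro c
  have : Equiv.ofBijective f (Finite.injective_iff_bijective.mp hinj) c = f c := rfl
  rw [this]
  have := peel_exit P c.val (by omega)
  exact this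


theorem cross_of_inversion : ∀ n : ℕ, ∀ P : PipeDream n, ∀ ω : Equiv.Perm (Fin n),
    P.HasExitPerm ω → ∀ p q : Fin n, p < q → (ω⁻¹ q).val < (ω⁻¹ p).val →
    ∃ r c, P.cross r c = true ∧
      ((P.west r c = p.val ∧ P.south r c = q.val) ∨
        (P.west r c = q.val ∧ P.south r c = p.val)) := by
  intro n
  induction n using Nat.strong_induction_on with
  | _ n ih =>
  intro P ω hexit p q hpq hinv
  have hpq' : p.val < q.val := hpq
  have hn2 : 2 ≤ n := by have := q.isLt; omega
  set a := (ω⁻¹ p).val with hadef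
  set b := (ω⁻¹ q).val with hbdef
  have haN : a < n := (ω⁻¹ p).isLt
  have hbN : b < n := (ω⁻¹ q).isLt
  have ha : P.exitPipe a = p.val := by
    have := hexit (ω⁻¹ p); rw [hadef]; simpa using this
  have hb : P.exitPipe b = q.val := by
    have := hexit (ω⁻¹ q); rw [hbdef]; simpa using this
  -- helper: produce the conclusion from an inversion of (p,q) in the peeled dream
  have key : ∀ cp cq : ℕ, cp + 2 ≤ n → cq + 2 ≤ n →
      (P.pipes 0 cp).2 = p.val → (P.pipes 0 cq).2 = q.val → cq < cp →
      ∃ r c, P.cross r c = true ∧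
        ((P.west r c = p.val ∧ P.south r c = q.val) ∨
          (P.west r c = q.val ∧ P.south r c = p.val)) := by
    intro cp cq hcp hcq hp hq hlt
    obtain ⟨ω', hexit', hω'⟩ := exists_peel_perm P ω hexit hn2
    have hbp := (pipes_bounds P 0 cp).2 (by omega)
    have hbq := (pipes_bounds P 0 cq).2 (by omega)
    have hcp' : cp < n - 1 := by omega
    have hcq' : cq < n - 1 := by omega
    set pf : Fin (n-1) := ⟨p.val - 1, by omega⟩ with hpfdef
    set qf : Fin (n-1) := ⟨q.val - 1, by omega⟩ with hqfdef
    have e1 : ω' ⟨cp, hcp'⟩ = pf := by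
      apply Fin.ext
      rw [hω' ⟨cp, hcp'⟩]
      show (P.pipes 0 cp).2 - 1 = p.val - 1
      rw [hp]
    have e2 : ω' ⟨cq, hcq'⟩ = qf := by
      apply Fin.ext
      rw [hω' ⟨cq, hcq'⟩]
      show (P.pipes 0 cq).2 - 1 = q.val - 1
      rw [hq]
    have i1 : ω'⁻¹ pf = ⟨cp, hcp'⟩ := by rw [← e1]; exact Equiv.symm_apply_apply ω' _
    have i2 : ω'⁻¹ qf = ⟨cq, hcq'⟩ := by rw [← e2]; exact Equiv.symm_apply_apply ω' _
    have hlt' : pf < qf := by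
      show p.val - 1 < q.val - 1
      omega
    have hinv' : (ω'⁻¹ qf).val < (ω'⁻¹ pf).val := by rw [i1, i2]; exact hlt
    obtain ⟨r, c, hcr, hws⟩ := ih (n-1) (by omega) (peel P) ω' hexit' pf qf hlt' hinv'
    rcases hws with ⟨h1, h2⟩ | ⟨h1, h2⟩
    · obtain ⟨hc2, hw2, hs2⟩ := peel_cross P hcr h1 h2
      refine ⟨r+1, c, hc2, Or.inl ⟨?_, ?_⟩⟩
      · rw [hw2]; show p.val - 1 + 1 = p.val; omega
      · rw [hs2]; show q.val - 1 + 1 = q.val; omega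
    · obtain ⟨hc2, hw2, hs2⟩ := peel_cross P hcr h1 h2
      refine ⟨r+1, c, hc2, Or.inr ⟨?_, ?_⟩⟩
      · rw [hw2]; show q.val - 1 + 1 = q.val; omega
      · rw [hs2]; show p.val - 1 + 1 = p.val; omega
  by_cases ca : P.cross 0 a = true <;> by_cases cb : P.cross 0 b = true
  · -- both straight
    have hpa : (P.pipes 0 a).2 = p.val := by rw [exitPipe, if_pos ca] at ha; exact ha
    have hqb : (P.pipes 0 b).2 = q.val := by rw [exitPipe, if_pos cb] at hb; exact hb
    exact key a b (by have := P.inShape 0 a ca; omega) (by have := P.inShape 0 b cb; omega)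
      hpa hqb hinv
  · -- p straight, q west-type
    have hpa : (P.pipes 0 a).2 = p.val := by rw [exitPipe, if_pos ca] at ha; exact ha
    have hqw : (P.pipes 0 b).1 = q.val := by
      rw [exitPipe, if_neg cb] at hb; exact hb
    obtain ⟨u, hub, helb, hsu, hall⟩ := trace P b (by rw [hqw]; omega)
    exact key a u (by have := P.inShape 0 a ca; omega) (by omega)
      hpa (by rw [hsu, hqw]) (by omega)
  · -- p west-type, q straight
    have hqb : (P.pipes 0 b).2 = q.val := by rw [exitPipe, if_pos cb] at hb; exact hb
    have hpw : (P.pipes 0 a).1 = p.val := by rw [exitPipe, if_neg ca] at ha; exact ha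
    by_cases hp0 : p.val = 0
    · have hwb : (P.pipes 0 b).1 = 0 := by
        by_contra hwb
        have : 1 ≤ (P.pipes 0 a).1 :=
          w_pos_mono P b a (by omega) (by omega) (by omega)
        omega
      exact ⟨0, b, cb, Or.inl ⟨by rw [west, hwb, hp0], hqb⟩⟩
    · obtain ⟨u', hu'a, helb', hsu', hall'⟩ := trace P a (by rw [hpw]; omega)
      rcases Nat.lt_trichotomy u' b with h1 | h1 | h1
      · -- u' < b : w_b = p.val, crossing at (0,b)
        have hwb : (P.pipes 0 b).1 = p.val := by
          rw [hall' b h1 (by omega), hpw]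
        exact ⟨0, b, cb, Or.inl ⟨hwb, hqb⟩⟩
      · exfalso; rw [h1, cb] at helb'; cases helb'
      · exact key u' b (by omega) (by have := P.inShape 0 b cb; omega)
          (by rw [hsu', hpw]) hqb h1
  · -- both west-type
    have hpw : (P.pipes 0 a).1 = p.val := by rw [exitPipe, if_neg ca] at ha; exact ha
    have hqw : (P.pipes 0 b).1 = q.val := by rw [exitPipe, if_neg cb] at hb; exact hb
    have hp1 : 1 ≤ p.val := by
      by_contra hp0
      have : 1 ≤ (P.pipes 0 a).1 :=
        w_pos_mono P b a (by omega) (by omega) (by rw [hqw]; omega)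
      omega
    obtain ⟨u, hub, helb, hsu, hall⟩ := trace P b (by rw [hqw]; omega)
    obtain ⟨u', hu'a, helb', hsu', hall'⟩ := trace P a (by rw [hpw]; omega)
    rcases Nat.lt_trichotomy u u' with h1 | h1 | h1
    · exact key u' u (by omega) (by omega) (by rw [hsu', hpw]) (by rw [hsu, hqw]) h1
    · exfalso
      rw [h1, hsu', hpw] at hsu
      rw [hqw] at hsu
      omega
    · exfalso
      have hq1 := hall (u+1) (by omega) (by omega)
      have hp2 := hall' (u+1) (by omega) (by omega)
      rw [hqw] at hq1
      rw [hpw] at hp2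
      omega


theorem main_aux : ∀ n : ℕ, ∀ P : PipeDream n, ∀ ω : Equiv.Perm (Fin n),
    P.Reduced → P.HasExitPerm ω → ∀ p q : Fin n, p < q →
    (ω⁻¹ p).val < (ω⁻¹ q).val → P.Path p.val q.val := by
  intro n
  induction n using Nat.strong_induction_on with
  | _ n ih =>
  intro P ω hred hexit p q hpq hord
  have hpq' : p.val < q.val := hpq
  have hn2 : 2 ≤ n := by have := q.isLt; omega
  set a := (ω⁻¹ p).val with hadef
  set b := (ω⁻¹ q).val with hbdef
  have haN : a < n := (ω⁻¹ p).isLt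
  have hbN : b < n := (ω⁻¹ q).isLt
  have ha : P.exitPipe a = p.val := by
    have := hexit (ω⁻¹ p); rw [hadef]; simpa using this
  have hb : P.exitPipe b = q.val := by
    have := hexit (ω⁻¹ q); rw [hbdef]; simpa using this
  obtain ⟨ω', hexit', hω'⟩ := exists_peel_perm P ω hexit hn2
  have hred' : (peel P).Reduced := peel_reduced P hred
  -- helper 1: a path in the peeled dream
  have keypath : ∀ x y cx cy : ℕ, 1 ≤ x → x < y → cx + 2 ≤ n → cy + 2 ≤ n →
      (P.pipes 0 cx).2 = x → (P.pipes 0 cy).2 = y → cx < cy → P.Path x y := by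
    intro x y cx cy hx1 hxy hcx hcy hsx hsy hlt
    have hbx := (pipes_bounds P 0 cx).2 (by omega)
    have hby := (pipes_bounds P 0 cy).2 (by omega)
    have hcx' : cx < n - 1 := by omega
    have hcy' : cy < n - 1 := by omega
    set xf : Fin (n-1) := ⟨x - 1, by omega⟩ with hxfdef
    set yf : Fin (n-1) := ⟨y - 1, by omega⟩ with hyfdef
    have e1 : ω' ⟨cx, hcx'⟩ = xf := by
      apply Fin.ext
      rw [hω' ⟨cx, hcx'⟩]
      show (P.pipes 0 cx).2 - 1 = x - 1
      rw [hsx]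
    have e2 : ω' ⟨cy, hcy'⟩ = yf := by
      apply Fin.ext
      rw [hω' ⟨cy, hcy'⟩]
      show (P.pipes 0 cy).2 - 1 = y - 1
      rw [hsy]
    have i1 : ω'⁻¹ xf = ⟨cx, hcx'⟩ := by rw [← e1]; exact Equiv.symm_apply_apply ω' _
    have i2 : ω'⁻¹ yf = ⟨cy, hcy'⟩ := by rw [← e2]; exact Equiv.symm_apply_apply ω' _
    have hlt' : xf < yf := by
      show x - 1 < y - 1
      omega
    have hord' : (ω'⁻¹ xf).val < (ω'⁻¹ yf).val := by rw [i1, i2]; exact hlt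
    have hP' := ih (n-1) (by omega) (peel P) ω' hred' hexit' xf yf hlt' hord'
    have h2 : P.Path (x - 1 + 1) (y - 1 + 1) := peel_path P hP'
    rw [show x - 1 + 1 = x by omega, show y - 1 + 1 = y by omega] at h2
    exact h2
  -- helper 2: a crossing (in rows ≥ 1) from an inversion in the peeled dream
  have keyx : ∀ x y cx cy : ℕ, 1 ≤ x → x < y → cx + 2 ≤ n → cy + 2 ≤ n →
      (P.pipes 0 cx).2 = x → (P.pipes 0 cy).2 = y → cy < cx →
      ∃ r c, P.cross (r+1) c = true ∧
        ((P.west (r+1) c = x ∧ P.south (r+1) c = y) ∨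
          (P.west (r+1) c = y ∧ P.south (r+1) c = x)) := by
    intro x y cx cy hx1 hxy hcx hcy hsx hsy hlt
    have hbx := (pipes_bounds P 0 cx).2 (by omega)
    have hby := (pipes_bounds P 0 cy).2 (by omega)
    have hcx' : cx < n - 1 := by omega
    have hcy' : cy < n - 1 := by omega
    set xf : Fin (n-1) := ⟨x - 1, by omega⟩ with hxfdef
    set yf : Fin (n-1) := ⟨y - 1, by omega⟩ with hyfdef
    have e1 : ω' ⟨cx, hcx'⟩ = xf := by
      apply Fin.ext
      rw [hω' ⟨cx, hcx'⟩]
      show (P.pipes 0 cx).2 - 1 = x - 1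
      rw [hsx]
    have e2 : ω' ⟨cy, hcy'⟩ = yf := by
      apply Fin.ext
      rw [hω' ⟨cy, hcy'⟩]
      show (P.pipes 0 cy).2 - 1 = y - 1
      rw [hsy]
    have i1 : ω'⁻¹ xf = ⟨cx, hcx'⟩ := by rw [← e1]; exact Equiv.symm_apply_apply ω' _
    have i2 : ω'⁻¹ yf = ⟨cy, hcy'⟩ := by rw [← e2]; exact Equiv.symm_apply_apply ω' _
    have hlt' : xf < yf := by
      show x - 1 < y - 1
      omega
    have hord' : (ω'⁻¹ yf).val < (ω'⁻¹ xf).val := by rw [i1, i2]; exact hlt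
    obtain ⟨r, c, hcr, hws⟩ :=
      cross_of_inversion (n-1) (peel P) ω' hexit' xf yf hlt' hord'
    rcases hws with ⟨h1, h2⟩ | ⟨h1, h2⟩
    · obtain ⟨hc2, hw2, hs2⟩ := peel_cross P hcr h1 h2
      refine ⟨r, c, hc2, Or.inl ⟨?_, ?_⟩⟩
      · rw [hw2]; show x - 1 + 1 = x; omega
      · rw [hs2]; show y - 1 + 1 = y; omega
    · obtain ⟨hc2, hw2, hs2⟩ := peel_cross P hcr h1 h2
      refine ⟨r, c, hc2, Or.inr ⟨?_, ?_⟩⟩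
      · rw [hw2]; show y - 1 + 1 = y; omega
      · rw [hs2]; show x - 1 + 1 = x; omega
  by_cases cb : P.cross 0 b = true
  · -- q exits straight up at column b
    have hqb : (P.pipes 0 b).2 = q.val := by rw [exitPipe, if_pos cb] at hb; exact hb
    have hbs : b + 2 ≤ n := by have := P.inShape 0 b cb; omega
    have hq1 : 1 ≤ q.val := by
      have := (pipes_bounds P 0 b).2 (by omega); omega
    by_cases ca : P.cross 0 a = true
    · have hpa : (P.pipes 0 a).2 = p.val := by rw [exitPipe, if_pos ca] at ha; exact ha
      have has : a + 2 ≤ n := by have := P.inShape 0 a ca; omega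
      have hp1 : 1 ≤ p.val := by
        have := (pipes_bounds P 0 a).2 (by omega); omega
      exact keypath p.val q.val a b hp1 hpq' has hbs hpa hqb hord
    · -- p turns up at column a (elbow), follow row 0 to column b
      have hpw : (P.pipes 0 a).1 = p.val := by rw [exitPipe, if_neg ca] at ha; exact ha
      have has : a + 2 ≤ n := by omega
      have hsa := (pipes_bounds P 0 a).2 (by omega)
      have hwsucc : (P.pipes 0 (a+1)).1 = (P.pipes 0 a).2 := by
        rw [pipes_fst_succ, if_neg ca]
      have hx1 : 1 ≤ (P.pipes 0 b).1 :=
        w_pos_mono P (a+1) b (by omega) (by omega) (by rw [hwsucc]; omega)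
      have path1 : P.Path p.val (P.pipes 0 b).1 := by
        rw [← hpw]; exact path_w P a b (by omega) (by omega)
      obtain ⟨u, hub, helb, hsu, hall⟩ := trace P b hx1
      have hxn := (pipes_bounds P 0 b).1 (by omega)
      rcases Nat.lt_trichotomy (P.pipes 0 b).1 q.val with h1 | h1 | h1
      · exact Relation.ReflTransGen.trans path1
          (keypath (P.pipes 0 b).1 q.val u b hx1 h1 (by omega) hbs hsu hqb hub)
      · exfalso
        have hge : b + 1 ≤ Ew P (b+1) := Ew_ge P (b+1) (by omega)
        have hle : Ew P (b+1) ≤ n - 1 := Ew_le P (b+1)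
        have hex : P.exitPipe (Ew P (b+1)) = (P.pipes 0 (b+1)).1 :=
          Ew_exit P (b+1) (by omega)
        have hwb1 : (P.pipes 0 (b+1)).1 = (P.pipes 0 b).1 := by
          rw [pipes_fst_succ, if_pos cb]
        have : P.exitPipe (Ew P (b+1)) = P.exitPipe b := by
          rw [hex, hwb1, h1, hb]
        have := exit_inj P ω hexit _ _ (by omega) (by omega) this
        omega
      · exfalso
        obtain ⟨r, c, hc2, hor⟩ := keyx q.val (P.pipes 0 b).1 b u hq1 h1
            hbs (by omega) hqb hsu hub
        have hne : ((0 : ℕ), b) ≠ (r+1, c) := by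
          simp only [ne_eq, Prod.mk.injEq]; omega
        apply hred 0 b (r+1) c cb hc2 hne
        have hwb : P.west 0 b = (P.pipes 0 b).1 := rfl
        have hsb : P.south 0 b = q.val := hqb
        rcases hor with ⟨h2, h3⟩ | ⟨h2, h3⟩
        · right; exact ⟨by rw [hwb, h3], by rw [hsb, h2]⟩
        · left; exact ⟨by rw [hwb, h2], by rw [hsb, h3]⟩
  · -- q exits as the west pipe of column b
    have hqw : (P.pipes 0 b).1 = q.val := by rw [exitPipe, if_neg cb] at hb; exact hb
    have hq1 : 1 ≤ q.val := by omega
    by_cases ca : P.cross 0 a = true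
    · have hpa : (P.pipes 0 a).2 = p.val := by rw [exitPipe, if_pos ca] at ha; exact ha
      have has : a + 2 ≤ n := by have := P.inShape 0 a ca; omega
      have hp1 : 1 ≤ p.val := by
        have := (pipes_bounds P 0 a).2 (by omega); omega
      obtain ⟨u, hub, helb, hsu, hall⟩ := trace P b (by rw [hqw]; omega)
      rcases Nat.lt_trichotomy a u with h1 | h1 | h1
      · exact keypath p.val q.val a u hp1 hpq' has (by omega) hpa
          (by rw [hsu, hqw]) h1
      · exfalso; rw [h1, helb] at ca; cases ca
      · exfalso
        obtain ⟨r, c, hc2, hor⟩ := keyx p.val q.val a u hp1 hpq' has (by omega)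
            hpa (by rw [hsu, hqw]) h1
        have hne : ((0 : ℕ), a) ≠ (r+1, c) := by
          simp only [ne_eq, Prod.mk.injEq]; omega
        apply hred 0 a (r+1) c ca hc2 hne
        have hwa : P.west 0 a = q.val := by
          show (P.pipes 0 a).1 = q.val
          rw [hall a h1 (by omega), hqw]
        have hsa2 : P.south 0 a = p.val := hpa
        rcases hor with ⟨h2, h3⟩ | ⟨h2, h3⟩
        · right; exact ⟨by rw [hwa, h3], by rw [hsa2, h2]⟩
        · left; exact ⟨by rw [hwa, h2], by rw [hsa2, h3]⟩
    · have hpw : (P.pipes 0 a).1 = p.val := by rw [exitPipe, if_neg ca] at ha; exact ha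
      rw [← hpw, ← hqw]
      exact path_w P a b (by omega) (by omega)

end PipeDream


/-- Let `ω ∈ S_n` and `P ∈ Π(ω)`.  If `i < j` and `ω⁻¹ i < ω⁻¹ j`,
then there is a directed path from `i` to `j` in the contact graph `P♯`. -/
theorem path_of_noncrossing (n : ℕ) (ω : Equiv.Perm (Fin n)) (P : PipeDream n)
    (hred : P.Reduced) (hexit : P.HasExitPerm ω)
    (i j : Fin n) (hij : i < j) (hw : ω⁻¹ i < ω⁻¹ j) :
    P.Path i.val j.val :=
  PipeDream.main_aux n P ω hred hexit i j hij hw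
end
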